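/- arXiv:1904.05856 — 8 statements merged into one kernel-verified Lean document; each statement's English description precedes it below -/
import Mathlib

section
/- The gradient flow update law for the algebraic (linear regression) error model achieves constant (O(1)) continuous-time regret: for every time horizon T ≥ 0, ∫₀^T e_y(t)² dt ≤ ‖θ(0) − θ*‖² / (2γ); in particular the bound is independent of T. -/
open scoped RealInnerProductSpace

/-- The gradient flow update law `θ̇(t) = -γ e_y(t) φ(t)` for the algebraic
(linear regression) error model achieves constant (O(1)) continuous-time regret:
for every `T ≥ 0`, `∫₀ᵀ e_y(t)² dt ≤ ‖θ(0) - θ*‖² / (2γ)`, a bound independent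
of `T`. -/
theorem gradient_flow_constant_regret
    {N : ℕ} (γ : ℝ) (hγ : 0 < γ)
    (θstar : EuclideanSpace ℝ (Fin N))
    (φ θ : ℝ → EuclideanSpace ℝ (Fin N))
    (hφ : Continuous φ)
    (ey : ℝ → ℝ)
    (hey : ∀ t, ey t = ⟪θ t - θstar, φ t⟫)
    (hθ : ∀ t, 0 ≤ t → HasDerivAt θ ((-(γ * ey t)) • φ t) t) :
    ∀ T : ℝ, 0 ≤ T → ∫ t in (0:ℝ)..T, (ey t) ^ 2 ≤ ‖θ 0 - θstar‖ ^ 2 / (2 * γ) := by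
  intro T hT
  set V : ℝ → ℝ := fun s => ‖θ s - θstar‖ ^ 2 with hV
  -- derivative of V on [0, ∞)
  have hVd : ∀ t, 0 ≤ t → HasDerivAt V (-(2 * γ) * (ey t) ^ 2) t := by
    intro t ht
    have hf : HasDerivAt (fun s => θ s - θstar) ((-(γ * ey t)) • φ t) t :=
      (hθ t ht).sub_const θstar
    have hinner : HasDerivAt (fun s => (⟪θ s - θstar, θ s - θstar⟫ : ℝ))
        (⟪θ t - θstar, (-(γ * ey t)) • φ t⟫ + ⟪(-(γ * ey t)) • φ t, θ t - θstar⟫) t :=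
      hf.inner ℝ hf
    have heq : (⟪θ t - θstar, (-(γ * ey t)) • φ t⟫ + ⟪(-(γ * ey t)) • φ t, θ t - θstar⟫ : ℝ)
        = -(2 * γ) * (ey t) ^ 2 := by
      rw [real_inner_smul_right, real_inner_smul_left, real_inner_comm (θ t - θstar) (φ t),
        ← hey t]
      ring
    rw [heq] at hinner
    have hfun : V = fun s => (⟪θ s - θstar, θ s - θstar⟫ : ℝ) := by
      funext s
      rw [hV, real_inner_self_eq_norm_sq]
    rw [hfun]
    exact hinner
  -- continuity of ey on [0, T]
  have hIcc : Set.uIcc (0:ℝ) T = Set.Icc 0 T := Set.uIcc_of_le hT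
  have hθc : ContinuousOn θ (Set.Icc 0 T) := fun t ht =>
    (hθ t ht.1).continuousAt.continuousWithinAt
  have heyc : ContinuousOn ey (Set.Icc 0 T) := by
    have : ContinuousOn (fun t => (⟪θ t - θstar, φ t⟫ : ℝ)) (Set.Icc 0 T) :=
      ContinuousOn.inner (hθc.sub continuousOn_const) hφ.continuousOn
    exact this.congr fun t _ => hey t
  have hint : IntervalIntegrable (fun t => -(2 * γ) * (ey t) ^ 2) MeasureTheory.volume 0 T := by
    apply ContinuousOn.intervalIntegrable
    rw [hIcc]
    exact (continuousOn_const.mul ((heyc.pow 2)))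
  -- FTC
  have hFTC : ∫ t in (0:ℝ)..T, -(2 * γ) * (ey t) ^ 2 = V T - V 0 := by
    apply intervalIntegral.integral_eq_sub_of_hasDerivAt
    · intro t ht
      rw [hIcc] at ht
      exact hVd t ht.1
    · exact hint
  have hconst : ∫ t in (0:ℝ)..T, -(2 * γ) * (ey t) ^ 2
      = -(2 * γ) * ∫ t in (0:ℝ)..T, (ey t) ^ 2 := by
    simp [intervalIntegral.integral_const_mul]
  have key : ∫ t in (0:ℝ)..T, (ey t) ^ 2 = (V 0 - V T) / (2 * γ) := by
    have h2γ : (2 * γ) ≠ 0 := by positivity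
    field_simp
    nlinarith [hFTC, hconst]
  rw [key]
  have hVT : 0 ≤ V T := by positivity
  have h2γ : (0:ℝ) < 2 * γ := by positivity
  have hnum : V 0 - V T ≤ ‖θ 0 - θstar‖ ^ 2 := by
    have : V 0 = ‖θ 0 - θstar‖ ^ 2 := rfl
    linarith
  gcongr
end

section
/- Under the gradient flow update law for the algebraic (linear regression) error model, the average continuous-time regret tends to zero: (1/T) ∫₀^T e_y(t)² dt ≤ ‖θ(0) − θ*‖²/(2γT) for all T > 0, and hence (1/T) ∫₀^T e_y(t)² dt → 0 as T → ∞. -/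
open scoped RealInnerProductSpace

/-- Under the gradient flow update law `θ̇(t) = -γ e_y(t) φ(t)` for the algebraic
(linear regression) error model, the average continuous-time regret tends to zero:
`(1/T) ∫₀ᵀ e_y(t)² dt ≤ ‖θ(0) - θ*‖²/(2γT)` for all `T > 0`, and hence
`(1/T) ∫₀ᵀ e_y(t)² dt → 0` as `T → ∞`. -/
theorem gradient_flow_average_regret_to_zero
    {N : ℕ} (γ : ℝ) (hγ : 0 < γ)
    (θstar : EuclideanSpace ℝ (Fin N))
    (φ θ : ℝ → EuclideanSpace ℝ (Fin N))
    (hφ : Continuous φ)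
    (ey : ℝ → ℝ)
    (hey : ∀ t, ey t = ⟪θ t - θstar, φ t⟫)
    (hθ : ∀ t, 0 ≤ t → HasDerivAt θ ((-(γ * ey t)) • φ t) t) :
    (∀ T : ℝ, 0 < T →
      (1 / T) * ∫ t in (0:ℝ)..T, (ey t) ^ 2 ≤ ‖θ 0 - θstar‖ ^ 2 / (2 * γ * T)) ∧
    Filter.Tendsto (fun T : ℝ => (1 / T) * ∫ t in (0:ℝ)..T, (ey t) ^ 2)
      Filter.atTop (nhds 0) := by
  -- continuity of ey on [0, ∞)
  have hθc : ∀ t : ℝ, 0 ≤ t → ContinuousAt θ t := fun t ht => (hθ t ht).continuousAt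
  have heyc : ∀ T : ℝ, 0 < T → ContinuousOn ey (Set.uIcc 0 T) := by
    intro T hT
    rw [Set.uIcc_of_le hT.le]
    have : ContinuousOn (fun t => ⟪θ t - θstar, φ t⟫) (Set.Icc 0 T) := by
      apply ContinuousOn.inner
      · exact fun t ht => ((hθc t ht.1).continuousWithinAt.sub continuousWithinAt_const)
      · exact hφ.continuousOn
    exact this.congr fun t _ => hey t
  -- key integral identity / bound
  have key : ∀ T : ℝ, 0 < T →
      (∫ t in (0:ℝ)..T, ey t ^ 2) ≤ ‖θ 0 - θstar‖ ^ 2 / (2 * γ) ∧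
      0 ≤ ∫ t in (0:ℝ)..T, ey t ^ 2 := by
    intro T hT
    have hInt : IntervalIntegrable (fun t => ey t ^ 2) MeasureTheory.volume 0 T :=
      (((heyc T hT).pow 2)).intervalIntegrable
    have hderiv : ∀ t ∈ Set.uIcc (0:ℝ) T,
        HasDerivAt (fun t => ‖θ t - θstar‖ ^ 2) (-(2 * γ) * ey t ^ 2) t := by
      intro t ht
      rw [Set.uIcc_of_le hT.le] at ht
      have h1 : HasDerivAt (fun t => θ t - θstar) ((-(γ * ey t)) • φ t) t :=
        (hθ t ht.1).sub_const _
      have h2 := h1.inner ℝ h1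
      have h3 : (⟪θ t - θstar, (-(γ * ey t)) • φ t⟫ + ⟪(-(γ * ey t)) • φ t, θ t - θstar⟫)
          = -(2 * γ) * ey t ^ 2 := by
        rw [real_inner_smul_left, real_inner_smul_right,
          real_inner_comm (θ t - θstar) (φ t), ← hey t]
        ring
      rw [h3] at h2
      have h4 : (fun t => ⟪θ t - θstar, θ t - θstar⟫) = fun t => ‖θ t - θstar‖ ^ 2 := by
        funext t; rw [real_inner_self_eq_norm_sq]
      rwa [h4] at h2
    have hInt' : IntervalIntegrable (fun t => -(2 * γ) * ey t ^ 2) MeasureTheory.volume 0 T :=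
      hInt.const_mul _
    have heq := intervalIntegral.integral_eq_sub_of_hasDerivAt hderiv hInt'
    rw [intervalIntegral.integral_const_mul] at heq
    have hnn : (0:ℝ) ≤ ∫ t in (0:ℝ)..T, ey t ^ 2 :=
      intervalIntegral.integral_nonneg hT.le (fun t _ => sq_nonneg _)
    constructor
    · have hVnn : (0:ℝ) ≤ ‖θ T - θstar‖ ^ 2 := sq_nonneg _
      have h2γ : (0:ℝ) < 2 * γ := by linarith
      rw [le_div_iff₀ h2γ]
      nlinarith [heq]
    · exact hnn
  have main : ∀ T : ℝ, 0 < T →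
      (1 / T) * ∫ t in (0:ℝ)..T, (ey t) ^ 2 ≤ ‖θ 0 - θstar‖ ^ 2 / (2 * γ * T) := by
    intro T hT
    have h := (key T hT).1
    calc 1 / T * ∫ t in (0:ℝ)..T, ey t ^ 2
        ≤ 1 / T * (‖θ 0 - θstar‖ ^ 2 / (2 * γ)) :=
          mul_le_mul_of_nonneg_left h (by positivity)
      _ = ‖θ 0 - θstar‖ ^ 2 / (2 * γ * T) := by
          rw [← div_div]; ring
  refine ⟨main, ?_⟩
  have hC : Filter.Tendsto (fun T : ℝ => ‖θ 0 - θstar‖ ^ 2 / (2 * γ * T))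
      Filter.atTop (nhds 0) := by
    have hfe : (fun T : ℝ => ‖θ 0 - θstar‖ ^ 2 / (2 * γ * T))
        = fun T : ℝ => (‖θ 0 - θstar‖ ^ 2 / (2 * γ)) / T := by
      funext T; rw [div_div]
    rw [hfe]
    exact Filter.Tendsto.div_atTop tendsto_const_nhds Filter.tendsto_id
  apply squeeze_zero' (g := fun T : ℝ => ‖θ 0 - θstar‖ ^ 2 / (2 * γ * T))
  · filter_upwards [Filter.eventually_gt_atTop 0] with T hT
    have := (key T hT).2
    positivity
  · filter_upwards [Filter.eventually_gt_atTop 0] with T hT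
    exact main T hT
  · exact hC
end

section
/- For the dynamical error model with the strictly-positive-real (KYP) conditions AᵀP + PA = −Q and Pb = cᵀ, and the gradient update law θ̇ = −γ φ̂ e_y, the Lyapunov function V(t) = γ⁻¹‖θ(t) − θ*‖² + e(t)ᵀP e(t) + α φ̃(t)ᵀP̄ φ̃(t) satisfies the derivative identity V̇(t) = −e(t)ᵀQ e(t) − α φ̃(t)ᵀQ̄ φ̃(t) + 2 e(t)ᵀP b (θ*ᵀφ̃(t)) for all t ≥ t₀. -/
open Matrix

private lemma dp_transpose {m : ℕ} (A : Matrix (Fin m) (Fin m) ℝ) (u v : Fin m → ℝ) :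
    A.mulVec u ⬝ᵥ v = u ⬝ᵥ Aᵀ.mulVec v := by
  simp only [Matrix.mulVec, Matrix.vecMul, dotProduct, Matrix.transpose_apply,
    Finset.sum_mul, Finset.mul_sum]
  rw [Finset.sum_comm]
  congr 1; ext i; congr 1; ext j; ring

private lemma quad_hasDerivAt {m : ℕ} (M : Matrix (Fin m) (Fin m) ℝ)
    (x : ℝ → Fin m → ℝ) (x' : Fin m → ℝ) (t : ℝ) (hx : HasDerivAt x x' t) :
    HasDerivAt (fun s => x s ⬝ᵥ M.mulVec (x s))
      (x' ⬝ᵥ M.mulVec (x t) + x t ⬝ᵥ M.mulVec x') t := by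
  have hxi : ∀ i, HasDerivAt (fun s => x s i) (x' i) t := fun i => (hasDerivAt_pi.mp hx) i
  have h : HasDerivAt (fun s => ∑ i, ∑ j, x s i * (M i j * x s j))
      (∑ i, ∑ j, (x' i * (M i j * x t j) + x t i * (M i j * x' j))) t := by
    refine HasDerivAt.fun_sum fun i _ => HasDerivAt.fun_sum fun j _ => ?_
    exact (hxi i).mul ((hxi j).const_mul (M i j))
  have heq : (fun s => ∑ i, ∑ j, x s i * (M i j * x s j))
      = fun s => x s ⬝ᵥ M.mulVec (x s) := by
    funext s
    simp [dotProduct, Matrix.mulVec, Finset.mul_sum]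
  rw [heq] at h
  convert h using 1
  simp [dotProduct, Matrix.mulVec, Finset.mul_sum, Finset.sum_add_distrib]

/-- For the dynamical error model with the strictly-positive-real (KYP) conditions
`AᵀP + PA = -Q`, `Pb = cᵀ`, and the gradient update law `θ̇ = -γ φ̂ e_y`, the
Lyapunov function `V(t) = γ⁻¹‖θ(t) - θ*‖² + e(t)ᵀP e(t) + α φ̃(t)ᵀP̄ φ̃(t)`
satisfies `V̇(t) = -e(t)ᵀQ e(t) - α φ̃(t)ᵀQ̄ φ̃(t) + 2 e(t)ᵀP b (θ*ᵀφ̃(t))`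
for all `t ≥ t₀`. -/
theorem kyp_lyapunov_derivative_identity
    {n N : ℕ} (t₀ γ α : ℝ) (hγ : 0 < γ) (hα : 0 < α)
    (A : Matrix (Fin n) (Fin n) ℝ) (b c : Fin n → ℝ)
    (P Q : Matrix (Fin n) (Fin n) ℝ)
    (hPsym : P.IsSymm) (hP : P.PosDef) (hQsym : Q.IsSymm) (hQ : Q.PosDef)
    (hLyap : Aᵀ * P + P * A = -Q) (hPb : P.mulVec b = c)
    (Λ Pbar Qbar : Matrix (Fin N) (Fin N) ℝ)
    (hPbarSym : Pbar.IsSymm) (hPbar : Pbar.PosDef)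
    (hQbarSym : Qbar.IsSymm) (hQbar : Qbar.PosDef)
    (hLyapBar : Λᵀ * Pbar + Pbar * Λ = -Qbar)
    (θstar : Fin N → ℝ)
    (e : ℝ → Fin n → ℝ) (θ φhat φtil : ℝ → Fin N → ℝ)
    (ey : ℝ → ℝ) (hey : ∀ t, ey t = c ⬝ᵥ e t)
    (hde : ∀ t, t₀ ≤ t → HasDerivAt e
      (A.mulVec (e t) + ((θ t - θstar) ⬝ᵥ φhat t) • b + (θstar ⬝ᵥ φtil t) • b) t)
    (hdφ : ∀ t, t₀ ≤ t → HasDerivAt φtil (Λ.mulVec (φtil t)) t)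
    (hdθ : ∀ t, t₀ ≤ t → HasDerivAt θ ((-(γ * ey t)) • φhat t) t)
    (V : ℝ → ℝ)
    (hV : ∀ t, V t = γ⁻¹ * ((θ t - θstar) ⬝ᵥ (θ t - θstar))
      + e t ⬝ᵥ P.mulVec (e t) + α * (φtil t ⬝ᵥ Pbar.mulVec (φtil t))) :
    ∀ t, t₀ ≤ t → HasDerivAt V
      (-(e t ⬝ᵥ Q.mulVec (e t)) - α * (φtil t ⬝ᵥ Qbar.mulVec (φtil t))
        + 2 * (e t ⬝ᵥ P.mulVec b) * (θstar ⬝ᵥ φtil t)) t := by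
  intro t ht
  set x := e t with hx
  set f := φtil t with hf
  set d := θ t - θstar with hd
  set e' := A.mulVec x + ((θ t - θstar) ⬝ᵥ φhat t) • b + (θstar ⬝ᵥ φtil t) • b with he'
  set θ' := (-(γ * ey t)) • φhat t with hθ'
  -- derivative of each summand
  have hdθsub : HasDerivAt (fun s => θ s - θstar) θ' t := (hdθ t ht).sub_const θstar
  have h1 : HasDerivAt (fun s => (θ s - θstar) ⬝ᵥ (θ s - θstar)) (θ' ⬝ᵥ d + d ⬝ᵥ θ') t := by
    have h := quad_hasDerivAt (1 : Matrix (Fin N) (Fin N) ℝ) (fun s => θ s - θstar) θ' t hdθsub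
    simp only [Matrix.one_mulVec] at h
    exact h
  have h2 : HasDerivAt (fun s => e s ⬝ᵥ P.mulVec (e s))
      (e' ⬝ᵥ P.mulVec x + x ⬝ᵥ P.mulVec e') t :=
    quad_hasDerivAt P e e' t (hde t ht)
  have h3 : HasDerivAt (fun s => φtil s ⬝ᵥ Pbar.mulVec (φtil s))
      ((Λ.mulVec f) ⬝ᵥ Pbar.mulVec f + f ⬝ᵥ Pbar.mulVec (Λ.mulVec f)) t :=
    quad_hasDerivAt Pbar φtil (Λ.mulVec f) t (hdφ t ht)
  have hsum := ((h1.const_mul γ⁻¹).add h2).add (h3.const_mul α)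
  have hVfun : V = fun s => γ⁻¹ * ((θ s - θstar) ⬝ᵥ (θ s - θstar))
      + e s ⬝ᵥ P.mulVec (e s) + α * (φtil s ⬝ᵥ Pbar.mulVec (φtil s)) := funext hV
  rw [hVfun]
  convert hsum using 1
  case e'_4 => rfl
  case e'_5 => rfl
  case e'_8 => rfl
  -- algebraic identities
  have key1 : x ⬝ᵥ P.mulVec b = ey t := by
    rw [hPb, dotProduct_comm, hey]
  have key2 : b ⬝ᵥ P.mulVec x = ey t := by
    have h := dp_transpose Pᵀ b x
    rw [Matrix.transpose_transpose, hPsym.eq, hPb] at h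
    rw [← h, hey]
  have key3 : (A.mulVec x) ⬝ᵥ P.mulVec x + x ⬝ᵥ P.mulVec (A.mulVec x) = -(x ⬝ᵥ Q.mulVec x) := by
    rw [dp_transpose A x (P.mulVec x), Matrix.mulVec_mulVec, Matrix.mulVec_mulVec,
      ← dotProduct_add, ← Matrix.add_mulVec, hLyap, Matrix.neg_mulVec, dotProduct_neg]
  have key4 : (Λ.mulVec f) ⬝ᵥ Pbar.mulVec f + f ⬝ᵥ Pbar.mulVec (Λ.mulVec f)
      = -(f ⬝ᵥ Qbar.mulVec f) := by
    rw [dp_transpose Λ f (Pbar.mulVec f), Matrix.mulVec_mulVec, Matrix.mulVec_mulVec,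
      ← dotProduct_add, ← Matrix.add_mulVec, hLyapBar, Matrix.neg_mulVec, dotProduct_neg]
  have hinv : γ⁻¹ * γ = 1 := inv_mul_cancel₀ hγ.ne'
  have hcomm : φhat t ⬝ᵥ d = d ⬝ᵥ φhat t := dotProduct_comm _ _
  rw [he', hθ']
  simp only [add_dotProduct, smul_dotProduct, dotProduct_add, dotProduct_smul,
    Matrix.mulVec_add, Matrix.mulVec_smul, smul_eq_mul]
  rw [key1, key2, hcomm, ← hd]
  linear_combination -key3 - α * key4 + (2 * ey t * (d ⬝ᵥ φhat t)) * hinv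
end

section
/- For the dynamical error model with the KYP/SPR conditions and the gradient update law θ̇ = −γ φ̂ e_y, if α ≥ 4‖Pb‖²‖θ*‖²/(λ_min(Q) λ_min(Q̄)), then the Lyapunov function V is nonincreasing; consequently all closed-loop signals are bounded: for all t ≥ t₀, ‖θ(t) − θ*‖² ≤ γ V(t₀), e(t)ᵀP e(t) ≤ V(t₀), and φ̃(t)ᵀP̄ φ̃(t) ≤ V(t₀)/α. -/
open Matrix


lemma myHasDerivAt_dot {m : ℕ} {f g : ℝ → Fin m → ℝ} {f' g' : Fin m → ℝ} {t : ℝ}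
    (hf : HasDerivAt f f' t) (hg : HasDerivAt g g' t) :
    HasDerivAt (fun s => f s ⬝ᵥ g s) (f' ⬝ᵥ g t + f t ⬝ᵥ g') t := by
  simp only [dotProduct, ← Finset.sum_add_distrib]
  exact HasDerivAt.fun_sum fun i _ => (hasDerivAt_pi.1 hf i).mul (hasDerivAt_pi.1 hg i)

lemma myHasDerivAt_mulVec {m k : ℕ} (M : Matrix (Fin m) (Fin k) ℝ) {g : ℝ → Fin k → ℝ}
    {g' : Fin k → ℝ} {t : ℝ} (hg : HasDerivAt g g' t) :
    HasDerivAt (fun s => M.mulVec (g s)) (M.mulVec g') t := by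
  rw [hasDerivAt_pi]
  intro i
  simp only [mulVec, dotProduct]
  exact HasDerivAt.fun_sum fun j _ => (hasDerivAt_pi.1 hg j).const_mul (M i j)

lemma myDot_sq_le {m : ℕ} (v w : Fin m → ℝ) : (v ⬝ᵥ w)^2 ≤ (v ⬝ᵥ v) * (w ⬝ᵥ w) := by
  simpa [dotProduct, sq] using Finset.sum_mul_sq_le_sq_mul_sq Finset.univ v w

lemma myDot_self_nonneg {m : ℕ} (v : Fin m → ℝ) : 0 ≤ v ⬝ᵥ v :=
  Finset.sum_nonneg fun i _ => mul_self_nonneg _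

lemma myQuad_pair {m : ℕ} (M P Q : Matrix (Fin m) (Fin m) ℝ) (h : Mᵀ * P + P * M = -Q)
    (x : Fin m → ℝ) :
    (M *ᵥ x) ⬝ᵥ (P *ᵥ x) + x ⬝ᵥ (P *ᵥ (M *ᵥ x)) = -(x ⬝ᵥ (Q *ᵥ x)) := by
  have h1 : (M *ᵥ x) ⬝ᵥ (P *ᵥ x) = x ⬝ᵥ ((Mᵀ * P) *ᵥ x) := by
    rw [← mulVec_mulVec, dotProduct_mulVec x Mᵀ, vecMul_transpose]
  have h2 : x ⬝ᵥ (P *ᵥ (M *ᵥ x)) = x ⬝ᵥ ((P * M) *ᵥ x) := by rw [mulVec_mulVec]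
  rw [h1, h2, ← dotProduct_add, ← add_mulVec, h, neg_mulVec, dotProduct_neg]

lemma myLam_pos {m : ℕ} {Q : Matrix (Fin m) (Fin m) ℝ} (hQ : Q.PosDef) {lam : ℝ}
    (h : IsGreatest {r : ℝ | ∀ x : Fin m → ℝ, r * (x ⬝ᵥ x) ≤ x ⬝ᵥ Q.mulVec x} lam) :
    0 < lam := by
  rcases Nat.eq_zero_or_pos m with hm | hm
  · subst hm
    have h1 : lam + 1 ∈ {r : ℝ | ∀ x : Fin 0 → ℝ, r * (x ⬝ᵥ x) ≤ x ⬝ᵥ Q.mulVec x} := by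
      intro x; simp [dotProduct]
    linarith [h.2 h1]
  · haveI : Nonempty (Fin m) := ⟨⟨0, hm⟩⟩
    haveI : Nontrivial (EuclideanSpace ℝ (Fin m)) := by
      refine ⟨0, EuclideanSpace.single ⟨0, hm⟩ 1, fun hc => ?_⟩
      have := congrArg (fun v : EuclideanSpace ℝ (Fin m) => v ⟨0, hm⟩) hc
      simp [EuclideanSpace.single_apply] at this
    set g : EuclideanSpace ℝ (Fin m) → ℝ := fun x => (fun i => x i) ⬝ᵥ Q.mulVec (fun i => x i)
      with hgdef
    have hcont : Continuous g := by
      have hf : Continuous fun x : Fin m → ℝ => x ⬝ᵥ Q.mulVec x := by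
        show Continuous fun x : Fin m → ℝ => ∑ i, x i * ∑ j, Q i j * x j
        exact continuous_finset_sum _ fun i _ => (continuous_apply i).mul
          (continuous_finset_sum _ fun j _ => (continuous_const.mul (continuous_apply j)))
      exact hf.comp (PiLp.continuous_ofLp (p := 2) (β := fun _ : Fin m => ℝ))
    obtain ⟨x₀, hx₀mem, hmin⟩ := (isCompact_sphere (0 : EuclideanSpace ℝ (Fin m)) 1).exists_isMinOn
      (NormedSpace.sphere_nonempty.mpr zero_le_one) hcont.continuousOn
    have hx₀norm : ‖x₀‖ = 1 := by simpa using hx₀mem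
    have hx₀ne : x₀ ≠ 0 := by intro hc; rw [hc] at hx₀norm; simp at hx₀norm
    have hm₀ : 0 < g x₀ := by
      have := hQ.dotProduct_mulVec_pos (x := fun i => x₀ i)
        (show (fun i => x₀ i) ≠ 0 from fun hc => hx₀ne (by ext i; exact congrFun hc i))
      simpa [hgdef, star_trivial] using this
    have key : ∀ y : EuclideanSpace ℝ (Fin m), y ≠ 0 →
        g x₀ * ((fun i => y i) ⬝ᵥ (fun i => y i)) ≤ (fun i => y i) ⬝ᵥ Q.mulVec (fun i => y i) := by
      intro y hyne
      set x : Fin m → ℝ := fun i => y i with hxdef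
      have hyn : 0 < ‖y‖ := norm_pos_iff.mpr hyne
      have hmem : ‖y‖⁻¹ • y ∈ Metric.sphere (0 : EuclideanSpace ℝ (Fin m)) 1 := by
        simp [norm_smul, abs_of_pos (inv_pos.mpr hyn), inv_mul_cancel₀ hyn.ne']
      have hle : g x₀ ≤ g (‖y‖⁻¹ • y) := hmin hmem
      have hval : g (‖y‖⁻¹ • y) = ‖y‖⁻¹ * (‖y‖⁻¹ * (x ⬝ᵥ Q.mulVec x)) := by
        show ((‖y‖⁻¹ • x) ⬝ᵥ Q.mulVec (‖y‖⁻¹ • x)) = _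
        rw [mulVec_smul, smul_dotProduct, dotProduct_smul, smul_eq_mul, smul_eq_mul]
      have hnormsq : ‖y‖^2 = x ⬝ᵥ x := by
        rw [EuclideanSpace.norm_eq, Real.sq_sqrt (Finset.sum_nonneg fun i _ => sq_nonneg _)]
        simp [dotProduct, sq, hxdef]
      have hxx : 0 < x ⬝ᵥ x := by rw [← hnormsq]; positivity
      rw [hval] at hle
      have hinv : ‖y‖⁻¹ * ‖y‖⁻¹ = (x ⬝ᵥ x)⁻¹ := by
        rw [← mul_inv]; congr 1; rw [← hnormsq]; ring
      calc g x₀ * (x ⬝ᵥ x) ≤ (‖y‖⁻¹ * (‖y‖⁻¹ * (x ⬝ᵥ Q.mulVec x))) * (x ⬝ᵥ x) :=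
            mul_le_mul_of_nonneg_right hle hxx.le
        _ = x ⬝ᵥ Q.mulVec x := by
            rw [← mul_assoc, hinv]; field_simp
    refine lt_of_lt_of_le hm₀ (h.2 ?_)
    intro x
    rcases eq_or_ne x 0 with rfl | hx
    · simp
    · exact key (WithLp.toLp 2 x) (fun h => hx (by simpa using congrArg WithLp.ofLp h))

/-- For the dynamical error model with the KYP/SPR conditions and the gradient
update law `θ̇ = -γ φ̂ e_y`, if `α ≥ 4‖Pb‖²‖θ*‖²/(λ_min(Q) λ_min(Q̄))`, then the
Lyapunov function `V` is nonincreasing; consequently all closed-loop signals are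
bounded: for all `t ≥ t₀`, `‖θ(t) - θ*‖² ≤ γ V(t₀)`, `e(t)ᵀP e(t) ≤ V(t₀)` and
`φ̃(t)ᵀP̄ φ̃(t) ≤ V(t₀)/α`. -/
theorem kyp_lyapunov_nonincreasing_and_bounded
    {n N : ℕ} (t₀ γ α : ℝ) (hγ : 0 < γ) (hα : 0 < α)
    (A : Matrix (Fin n) (Fin n) ℝ) (b c : Fin n → ℝ)
    (P Q : Matrix (Fin n) (Fin n) ℝ)
    (hPsym : P.IsSymm) (hP : P.PosDef) (hQsym : Q.IsSymm) (hQ : Q.PosDef)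
    (hLyap : Aᵀ * P + P * A = -Q) (hPb : P.mulVec b = c)
    (Λ Pbar Qbar : Matrix (Fin N) (Fin N) ℝ)
    (hPbarSym : Pbar.IsSymm) (hPbar : Pbar.PosDef)
    (hQbarSym : Qbar.IsSymm) (hQbar : Qbar.PosDef)
    (hLyapBar : Λᵀ * Pbar + Pbar * Λ = -Qbar)
    (lamQ lamQbar : ℝ)
    (hlamQ : IsGreatest {r : ℝ | ∀ x : Fin n → ℝ, r * (x ⬝ᵥ x) ≤ x ⬝ᵥ Q.mulVec x} lamQ)
    (hlamQbar : IsGreatest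
      {r : ℝ | ∀ x : Fin N → ℝ, r * (x ⬝ᵥ x) ≤ x ⬝ᵥ Qbar.mulVec x} lamQbar)
    (θstar : Fin N → ℝ)
    (hαbig : 4 * (P.mulVec b ⬝ᵥ P.mulVec b) * (θstar ⬝ᵥ θstar) / (lamQ * lamQbar) ≤ α)
    (e : ℝ → Fin n → ℝ) (θ φhat φtil : ℝ → Fin N → ℝ)
    (ey : ℝ → ℝ) (hey : ∀ t, ey t = c ⬝ᵥ e t)
    (hde : ∀ t, t₀ ≤ t → HasDerivAt e
      (A.mulVec (e t) + ((θ t - θstar) ⬝ᵥ φhat t) • b + (θstar ⬝ᵥ φtil t) • b) t)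
    (hdφ : ∀ t, t₀ ≤ t → HasDerivAt φtil (Λ.mulVec (φtil t)) t)
    (hdθ : ∀ t, t₀ ≤ t → HasDerivAt θ ((-(γ * ey t)) • φhat t) t)
    (V : ℝ → ℝ)
    (hV : ∀ t, V t = γ⁻¹ * ((θ t - θstar) ⬝ᵥ (θ t - θstar))
      + e t ⬝ᵥ P.mulVec (e t) + α * (φtil t ⬝ᵥ Pbar.mulVec (φtil t))) :
    AntitoneOn V (Set.Ici t₀) ∧
    ∀ t, t₀ ≤ t →
      (θ t - θstar) ⬝ᵥ (θ t - θstar) ≤ γ * V t₀ ∧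
      e t ⬝ᵥ P.mulVec (e t) ≤ V t₀ ∧
      φtil t ⬝ᵥ Pbar.mulVec (φtil t) ≤ V t₀ / α := by
  have hlQ : 0 < lamQ := myLam_pos hQ hlamQ
  have hlQb : 0 < lamQbar := myLam_pos hQbar hlamQbar
  -- spell out the derivative of V
  set D : ℝ → ℝ := fun t => -(e t ⬝ᵥ Q.mulVec (e t))
      + 2 * (θstar ⬝ᵥ φtil t) * ((P.mulVec b) ⬝ᵥ e t)
      - α * (φtil t ⬝ᵥ Qbar.mulVec (φtil t)) with hD
  have hVf : V = fun s => γ⁻¹ * ((θ s - θstar) ⬝ᵥ (θ s - θstar))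
      + e s ⬝ᵥ P.mulVec (e s) + α * (φtil s ⬝ᵥ Pbar.mulVec (φtil s)) := funext hV
  have hkey : ∀ t, t₀ ≤ t → HasDerivAt V (D t) t := by
    intro t ht
    have hψ : HasDerivAt (fun s => θ s - θstar) ((-(γ * ey t)) • φhat t) t :=
      (hdθ t ht).sub_const _
    have h1 := myHasDerivAt_dot hψ hψ
    have h2 := myHasDerivAt_dot (hde t ht) (myHasDerivAt_mulVec P (hde t ht))
    have h3 := myHasDerivAt_dot (hdφ t ht) (myHasDerivAt_mulVec Pbar (hdφ t ht))
    have H := ((h1.const_mul γ⁻¹).add h2).add (h3.const_mul α)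
    rw [hVf]
    convert H using 1
    · rfl
    · rfl
    · rfl
    set s1 : ℝ := (θ t - θstar) ⬝ᵥ φhat t with hs1
    set s2 : ℝ := θstar ⬝ᵥ φtil t with hs2
    have E1 : γ⁻¹ * (((-(γ * ey t)) • φhat t) ⬝ᵥ (θ t - θstar)
        + (θ t - θstar) ⬝ᵥ ((-(γ * ey t)) • φhat t)) = -2 * ey t * s1 := by
      rw [smul_dotProduct, dotProduct_smul, dotProduct_comm (φhat t), smul_eq_mul, hs1]
      field_simp
      ring
    have id2 : b ⬝ᵥ (P *ᵥ e t) = (P *ᵥ b) ⬝ᵥ e t := by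
      rw [dotProduct_mulVec, ← mulVec_transpose, hPsym.eq]
    have id3 : e t ⬝ᵥ (P *ᵥ b) = (P *ᵥ b) ⬝ᵥ e t := dotProduct_comm _ _
    have E2 : (A *ᵥ e t + s1 • b + s2 • b) ⬝ᵥ (P *ᵥ e t)
        + e t ⬝ᵥ (P *ᵥ (A *ᵥ e t + s1 • b + s2 • b))
        = -(e t ⬝ᵥ Q.mulVec (e t)) + (s1 + s2) * (2 * ((P *ᵥ b) ⬝ᵥ e t)) := by
      simp only [add_dotProduct, dotProduct_add, mulVec_add, mulVec_smul, smul_dotProduct,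
        dotProduct_smul, smul_eq_mul]
      linear_combination myQuad_pair A P Q hLyap (e t) + (s1 + s2) * id2 + (s1 + s2) * id3
    have E3 : (Λ *ᵥ φtil t) ⬝ᵥ (Pbar *ᵥ φtil t) + φtil t ⬝ᵥ (Pbar *ᵥ (Λ *ᵥ φtil t))
        = -(φtil t ⬝ᵥ Qbar.mulVec (φtil t)) := myQuad_pair Λ Pbar Qbar hLyapBar (φtil t)
    have hey' : ey t = (P *ᵥ b) ⬝ᵥ e t := by rw [hey t, ← hPb]
    rw [hD]
    simp only
    rw [E1, E2, E3, hey']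
    ring
  have hDnonpos : ∀ t, D t ≤ 0 := by
    intro t
    set X : ℝ := e t ⬝ᵥ e t with hX
    set Y : ℝ := φtil t ⬝ᵥ φtil t with hY
    set K : ℝ := (P *ᵥ b) ⬝ᵥ (P *ᵥ b) with hK
    set T : ℝ := θstar ⬝ᵥ θstar with hT
    set p : ℝ := (P *ᵥ b) ⬝ᵥ e t with hp
    set s2 : ℝ := θstar ⬝ᵥ φtil t with hs2
    have hXnn : 0 ≤ X := myDot_self_nonneg _
    have hYnn : 0 ≤ Y := myDot_self_nonneg _
    have hKnn : 0 ≤ K := myDot_self_nonneg _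
    have hTnn : 0 ≤ T := myDot_self_nonneg _
    have cs1 : p ^ 2 ≤ K * X := myDot_sq_le _ _
    have cs2 : s2 ^ 2 ≤ T * Y := myDot_sq_le _ _
    have q1 : lamQ * X ≤ e t ⬝ᵥ Q.mulVec (e t) := hlamQ.1 (e t)
    have q2 : lamQbar * Y ≤ φtil t ⬝ᵥ Qbar.mulVec (φtil t) := hlamQbar.1 (φtil t)
    have cond : 4 * K * T ≤ α * (lamQ * lamQbar) := by
      rw [div_le_iff₀ (mul_pos hlQ hlQb)] at hαbig
      linarith
    have c12 : s2 ^ 2 * p ^ 2 ≤ (T * Y) * (K * X) :=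
      mul_le_mul cs2 cs1 (sq_nonneg _) (mul_nonneg hTnn hYnn)
    have hSnn : 0 ≤ lamQ * X + α * lamQbar * Y := by positivity
    have hsq : (2 * s2 * p) ^ 2 ≤ (lamQ * X + α * lamQbar * Y) ^ 2 := by
      nlinarith [sq_nonneg (lamQ * X - α * lamQbar * Y), mul_nonneg hXnn hYnn,
        mul_le_mul_of_nonneg_right cond (mul_nonneg hXnn hYnn)]
    have h2sp : 2 * s2 * p ≤ lamQ * X + α * lamQbar * Y := by
      nlinarith [hsq, hSnn]
    have q2' : α * (lamQbar * Y) ≤ α * (φtil t ⬝ᵥ Qbar.mulVec (φtil t)) :=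
      mul_le_mul_of_nonneg_left q2 hα.le
    rw [hD]
    simp only
    rw [← hp, ← hs2]
    nlinarith [q1, q2', h2sp]
  have hanti : AntitoneOn V (Set.Ici t₀) := by
    refine antitoneOn_of_hasDerivWithinAt_nonpos (convex_Ici t₀)
      (fun t ht => (hkey t ht).continuousAt.continuousWithinAt) (fun x hx => ?_)
      (fun x _ => hDnonpos x)
    rw [interior_Ici] at hx
    exact (hkey x (le_of_lt hx)).hasDerivWithinAt
  refine ⟨hanti, fun t ht => ?_⟩
  have hVt : V t ≤ V t₀ := hanti Set.self_mem_Ici ht ht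
  have nθ : 0 ≤ (θ t - θstar) ⬝ᵥ (θ t - θstar) := myDot_self_nonneg _
  have ne1 : 0 ≤ e t ⬝ᵥ P.mulVec (e t) := by
    simpa [star_trivial] using hP.posSemidef.dotProduct_mulVec_nonneg (x := e t)
  have nφ : 0 ≤ φtil t ⬝ᵥ Pbar.mulVec (φtil t) := by
    simpa [star_trivial] using hPbar.posSemidef.dotProduct_mulVec_nonneg (x := φtil t)
  have hVexp := hV t
  have hαφ : 0 ≤ α * (φtil t ⬝ᵥ Pbar.mulVec (φtil t)) := mul_nonneg hα.le nφ
  have hγθ : 0 ≤ γ⁻¹ * ((θ t - θstar) ⬝ᵥ (θ t - θstar)) :=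
    mul_nonneg (inv_nonneg.mpr hγ.le) nθ
  refine ⟨?_, ?_, ?_⟩
  · have h1 : γ⁻¹ * ((θ t - θstar) ⬝ᵥ (θ t - θstar)) ≤ V t₀ := by linarith
    have h2 := mul_le_mul_of_nonneg_left h1 hγ.le
    calc (θ t - θstar) ⬝ᵥ (θ t - θstar)
        = γ * (γ⁻¹ * ((θ t - θstar) ⬝ᵥ (θ t - θstar))) := by field_simp
      _ ≤ γ * V t₀ := h2
  · have h1 : γ⁻¹ * ((θ t - θstar) ⬝ᵥ (θ t - θstar)) ≥ 0 :=
      mul_nonneg (inv_nonneg.mpr hγ.le) nθ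
    have h2 : 0 ≤ α * (φtil t ⬝ᵥ Pbar.mulVec (φtil t)) := mul_nonneg hα.le nφ
    linarith
  · have h1 : γ⁻¹ * ((θ t - θstar) ⬝ᵥ (θ t - θstar)) ≥ 0 :=
      mul_nonneg (inv_nonneg.mpr hγ.le) nθ
    have h2 : α * (φtil t ⬝ᵥ Pbar.mulVec (φtil t)) ≤ V t₀ := by linarith
    rw [le_div_iff₀ hα]
    linarith [h2]
end

section
/- For the dynamical error model with the KYP/SPR conditions and the gradient update law θ̇ = −γ φ̂ e_y, if α ≥ 4‖Pb‖²‖θ*‖²/(λ_min(Q) λ_min(Q̄)), then the state error and regressor-mismatch signals are square integrable: ∫_{t₀}^∞ e(t)ᵀQ e(t) dt ≤ 2 V(t₀) and ∫_{t₀}^∞ φ̃(t)ᵀQ̄ φ̃(t) dt ≤ 2 V(t₀)/α; in particular ∫_{t₀}^∞ ‖e(t)‖² dt ≤ 2 V(t₀)/λ_min(Q) and ∫_{t₀}^∞ ‖φ̃(t)‖² dt ≤ 2 V(t₀)/(α λ_min(Q̄)) (i.e., e, φ̃ ∈ L₂). -/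
open Matrix MeasureTheory Set Filter intervalIntegral

private lemma cont_dotself' {n : ℕ} : Continuous fun x : Fin n → ℝ => x ⬝ᵥ x := by
  simp only [dotProduct]
  exact continuous_finset_sum _ fun i _ => (continuous_apply i).mul (continuous_apply i)

private lemma dot_self_nonneg' {n : ℕ} (x : Fin n → ℝ) : 0 ≤ x ⬝ᵥ x :=
  Finset.sum_nonneg fun i _ => mul_self_nonneg _

private lemma hasDerivAt_dot' {n : ℕ} {x y : ℝ → Fin n → ℝ} {x' y' : Fin n → ℝ} {t : ℝ}
    (hx : HasDerivAt x x' t) (hy : HasDerivAt y y' t) :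
    HasDerivAt (fun s => x s ⬝ᵥ y s) (x' ⬝ᵥ y t + x t ⬝ᵥ y') t := by
  have h := HasDerivAt.fun_sum (u := Finset.univ)
    (fun i _ => ((hasDerivAt_pi.mp hx i).mul (hasDerivAt_pi.mp hy i)))
  simpa [dotProduct, Finset.sum_add_distrib] using h

private lemma hasDerivAt_mulVec' {n m : ℕ} (M : Matrix (Fin m) (Fin n) ℝ)
    {x : ℝ → Fin n → ℝ} {x' : Fin n → ℝ} {t : ℝ} (hx : HasDerivAt x x' t) :
    HasDerivAt (fun s => M.mulVec (x s)) (M.mulVec x') t := by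
  rw [hasDerivAt_pi]
  intro i
  simp only [mulVec, dotProduct]
  exact HasDerivAt.fun_sum fun j _ => (hasDerivAt_pi.mp hx j).const_mul (M i j)

private lemma dot_mulVec_comm' {n : ℕ} {M : Matrix (Fin n) (Fin n) ℝ} (hM : M.IsSymm)
    (x y : Fin n → ℝ) : x ⬝ᵥ M.mulVec y = y ⬝ᵥ M.mulVec x := by
  calc x ⬝ᵥ M *ᵥ y = x ᵥ* M ⬝ᵥ y := dotProduct_mulVec _ _ _
    _ = x ᵥ* Mᵀ ⬝ᵥ y := by rw [hM]
    _ = (M *ᵥ x) ⬝ᵥ y := by rw [vecMul_transpose]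
    _ = y ⬝ᵥ (M *ᵥ x) := dotProduct_comm _ _

private lemma dot_sq_le' {n : ℕ} (x y : Fin n → ℝ) :
    (x ⬝ᵥ y) ^ 2 ≤ (x ⬝ᵥ x) * (y ⬝ᵥ y) := by
  simpa [dotProduct, pow_two] using Finset.sum_mul_sq_le_sq_mul_sq Finset.univ x y

private lemma cont_quad' {n : ℕ} (M : Matrix (Fin n) (Fin n) ℝ) :
    Continuous fun x : Fin n → ℝ => x ⬝ᵥ M.mulVec x := by
  simp only [dotProduct, mulVec]
  exact continuous_finset_sum _ fun i _ => (continuous_apply i).mul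
    (continuous_finset_sum _ fun j _ => (continuous_const.mul (continuous_apply j)))

private lemma cont_dotr' {n : ℕ} (v : Fin n → ℝ) :
    Continuous fun x : Fin n → ℝ => x ⬝ᵥ v := by
  simp only [dotProduct]
  exact continuous_finset_sum _ fun i _ => (continuous_apply i).mul continuous_const

private lemma cont_dotl' {n : ℕ} (v : Fin n → ℝ) :
    Continuous fun x : Fin n → ℝ => v ⬝ᵥ x := by
  simp only [dotProduct]
  exact continuous_finset_sum _ fun i _ => (continuous_const.mul (continuous_apply i))

private lemma lam_pos' {n : ℕ} {Q : Matrix (Fin n) (Fin n) ℝ} (hQ : Q.PosDef) {lam : ℝ}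
    (h : IsGreatest {r : ℝ | ∀ x : Fin n → ℝ, r * (x ⬝ᵥ x) ≤ x ⬝ᵥ Q.mulVec x} lam) :
    0 < lam := by
  rcases Nat.eq_zero_or_pos n with hn | hn
  · exfalso
    subst hn
    have h1 : (lam + 1) ∈ {r : ℝ | ∀ x : Fin 0 → ℝ, r * (x ⬝ᵥ x) ≤ x ⬝ᵥ Q.mulVec x} := by
      intro x; simp [dotProduct]
    linarith [h.2 h1]
  · have hcont : Continuous fun x : Fin n → ℝ => x ⬝ᵥ Q.mulVec x := cont_quad' Q
    have hdotc : Continuous fun x : Fin n → ℝ => x ⬝ᵥ x := by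
      simp only [dotProduct]
      exact continuous_finset_sum _ fun i _ => (continuous_apply i).mul (continuous_apply i)
    set S : Set (Fin n → ℝ) := {x | x ⬝ᵥ x = 1} with hS
    have hclosed : IsClosed S := isClosed_eq hdotc continuous_const
    have hbdd : Bornology.IsBounded S := by
      rw [isBounded_iff_forall_norm_le]
      refine ⟨1, fun x hx => ?_⟩
      rw [pi_norm_le_iff_of_nonneg zero_le_one]
      intro i
      have h1 : x i * x i ≤ x ⬝ᵥ x :=
        Finset.single_le_sum (f := fun j => x j * x j)
          (fun j _ => mul_self_nonneg _) (Finset.mem_univ i)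
      have h2 : x ⬝ᵥ x = 1 := hx
      have : |x i| ≤ 1 := by nlinarith [abs_nonneg (x i), abs_mul_abs_self (x i)]
      simpa using this
    have hScompact : IsCompact S := Metric.isCompact_of_isClosed_isBounded hclosed hbdd
    have hne : S.Nonempty := by
      refine ⟨Pi.single (⟨0, hn⟩ : Fin n) 1, ?_⟩
      have : Pi.single (⟨0, hn⟩ : Fin n) (1:ℝ) ⬝ᵥ Pi.single (⟨0, hn⟩ : Fin n) 1 = 1 := by
        simp [dotProduct, Pi.single_apply]
      exact this
    obtain ⟨x₀, hx₀S, hmin⟩ := hScompact.exists_isMinOn hne hcont.continuousOn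
    have hx₀ne : x₀ ≠ 0 := by
      intro h0
      have : x₀ ⬝ᵥ x₀ = 1 := hx₀S
      rw [h0] at this
      simp [dotProduct] at this
    have hm : 0 < x₀ ⬝ᵥ Q.mulVec x₀ := by
      have := hQ.dotProduct_mulVec_pos hx₀ne
      simpa using this
    have hmem : (x₀ ⬝ᵥ Q.mulVec x₀) ∈
        {r : ℝ | ∀ x : Fin n → ℝ, r * (x ⬝ᵥ x) ≤ x ⬝ᵥ Q.mulVec x} := by
      intro x
      rcases eq_or_ne x 0 with hx | hx
      · simp [hx, dotProduct]
      · have hxx : 0 < x ⬝ᵥ x :=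
          lt_of_le_of_ne (dot_self_nonneg' x) (fun h => hx (dotProduct_self_eq_zero.mp h.symm))
        set s := Real.sqrt (x ⬝ᵥ x) with hs
        have hspos : 0 < s := Real.sqrt_pos.mpr hxx
        have hs2 : s * s = x ⬝ᵥ x := Real.mul_self_sqrt (le_of_lt hxx)
        have hyS : (s⁻¹ • x) ∈ S := by
          show (s⁻¹ • x) ⬝ᵥ (s⁻¹ • x) = 1
          rw [smul_dotProduct, dotProduct_smul]
          simp only [smul_eq_mul]
          field_simp
          nlinarith [hs2]
        have hy := hmin hyS
        have hyQ : (s⁻¹ • x) ⬝ᵥ Q.mulVec (s⁻¹ • x) = s⁻¹ * s⁻¹ * (x ⬝ᵥ Q.mulVec x) := by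
          rw [mulVec_smul, smul_dotProduct, dotProduct_smul]
          simp [smul_eq_mul]
          ring
        have : x₀ ⬝ᵥ Q.mulVec x₀ ≤ s⁻¹ * s⁻¹ * (x ⬝ᵥ Q.mulVec x) := by
          simpa [hyQ] using hy
        have hcalc : (x₀ ⬝ᵥ Q.mulVec x₀) * (x ⬝ᵥ x) ≤ x ⬝ᵥ Q.mulVec x := by
          have h2 : s ≠ 0 := ne_of_gt hspos
          have := mul_le_mul_of_nonneg_right this (le_of_lt hxx)
          calc (x₀ ⬝ᵥ Q.mulVec x₀) * (x ⬝ᵥ x) ≤ s⁻¹ * s⁻¹ * (x ⬝ᵥ Q.mulVec x) * (x ⬝ᵥ x) := this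
            _ = x ⬝ᵥ Q.mulVec x := by rw [← hs2]; field_simp
        exact hcalc
    exact lt_of_lt_of_le hm (h.2 hmem)

private lemma key_ineq' {s k E2 EQ F2 FQ B T lamQ lamQbar α : ℝ}
    (hE2 : 0 ≤ E2) (hF2 : 0 ≤ F2) (hB : 0 ≤ B) (hT : 0 ≤ T)
    (hk : k ^ 2 ≤ B * E2) (hs : s ^ 2 ≤ T * F2)
    (hEQ : lamQ * E2 ≤ EQ) (hFQ : lamQbar * F2 ≤ FQ)
    (hlq : 0 < lamQ) (hlqb : 0 < lamQbar) (hα : 0 < α)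
    (hbig : 4 * B * T ≤ α * (lamQ * lamQbar)) :
    2 * (s * k) ≤ 1 / 2 * EQ + α / 2 * FQ := by
  have hEQ0 : 0 ≤ EQ := le_trans (by positivity) hEQ
  have hFQ0 : 0 ≤ FQ := le_trans (by positivity) hFQ
  have h2 : s ^ 2 * k ^ 2 ≤ (T * F2) * (B * E2) :=
    mul_le_mul hs hk (sq_nonneg k) (by positivity)
  have h3 : (lamQ * E2) * (lamQbar * F2) ≤ EQ * FQ :=
    mul_le_mul hEQ hFQ (by positivity) hEQ0
  have h1 : (2 * (s * k)) ^ 2 ≤ α * (EQ * FQ) := by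
    nlinarith [mul_le_mul_of_nonneg_right hbig (mul_nonneg hE2 hF2),
      mul_le_mul_of_nonneg_left h3 hα.le]
  have hR0 : 0 ≤ 1 / 2 * EQ + α / 2 * FQ := by positivity
  have hsq : (2 * (s * k)) ^ 2 ≤ (1 / 2 * EQ + α / 2 * FQ) ^ 2 := by
    nlinarith [sq_nonneg (EQ - α * FQ), h1]
  nlinarith [hsq, hR0]

private lemma integrable_of_bounds' (t₀ C : ℝ) (f : ℝ → ℝ) (hf : ContinuousOn f (Set.Ici t₀))
    (hnn : ∀ t, 0 ≤ f t) (hb : ∀ T, t₀ ≤ T → (∫ t in t₀..T, f t) ≤ C) :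
    IntegrableOn f (Set.Ici t₀) ∧ (∫ t in Set.Ici t₀, f t) ≤ C := by
  have hii : ∀ i : ℕ, IntervalIntegrable f volume t₀ (t₀ + i) := by
    intro i
    apply ContinuousOn.intervalIntegrable
    apply hf.mono
    rw [Set.uIcc_of_le (le_add_of_nonneg_right (Nat.cast_nonneg i))]
    exact fun x hx => hx.1
  have hfi : ∀ i : ℕ, IntegrableOn f (Set.Ioc t₀ (t₀ + i)) := fun i => (hii i).1
  have htend : Tendsto (fun i : ℕ => t₀ + (i : ℝ)) atTop atTop :=
    tendsto_atTop_add_const_left _ t₀ tendsto_natCast_atTop_atTop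
  have hboundall : ∀ i : ℕ, (∫ t in t₀..(t₀ + i : ℝ), ‖f t‖) ≤ C := by
    intro i
    have : (fun t => ‖f t‖) = f := funext fun t => Real.norm_of_nonneg (hnn t)
    rw [this]
    exact hb _ (le_add_of_nonneg_right (Nat.cast_nonneg i))
  have hIoi : IntegrableOn f (Set.Ioi t₀) :=
    integrableOn_Ioi_of_intervalIntegral_norm_bounded C t₀ hfi htend
      (Filter.Eventually.of_forall hboundall)
  have hIci : IntegrableOn f (Set.Ici t₀) := by
    rwa [integrableOn_Ici_iff_integrableOn_Ioi]
  refine ⟨hIci, ?_⟩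
  rw [MeasureTheory.integral_Ici_eq_integral_Ioi]
  have hlim := intervalIntegral_tendsto_integral_Ioi t₀ hIoi htend
  exact le_of_tendsto hlim (Filter.Eventually.of_forall (fun i => hb _ (le_add_of_nonneg_right (Nat.cast_nonneg i))))


/-- For the dynamical error model with the KYP/SPR conditions and the gradient
update law `θ̇ = -γ φ̂ e_y`, if `α ≥ 4‖Pb‖²‖θ*‖²/(λ_min(Q) λ_min(Q̄))`, then the
state error and regressor-mismatch signals are square integrable:
`∫_{t₀}^∞ eᵀQe ≤ 2V(t₀)`, `∫_{t₀}^∞ φ̃ᵀQ̄φ̃ ≤ 2V(t₀)/α`; in particular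
`∫_{t₀}^∞ ‖e‖² ≤ 2V(t₀)/λ_min(Q)` and `∫_{t₀}^∞ ‖φ̃‖² ≤ 2V(t₀)/(α λ_min(Q̄))`
(i.e. `e, φ̃ ∈ L₂`). -/
theorem kyp_state_error_square_integrable
    {n N : ℕ} (t₀ γ α : ℝ) (hγ : 0 < γ) (hα : 0 < α)
    (A : Matrix (Fin n) (Fin n) ℝ) (b c : Fin n → ℝ)
    (P Q : Matrix (Fin n) (Fin n) ℝ)
    (hPsym : P.IsSymm) (hP : P.PosDef) (hQsym : Q.IsSymm) (hQ : Q.PosDef)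
    (hLyap : Aᵀ * P + P * A = -Q) (hPb : P.mulVec b = c)
    (Λ Pbar Qbar : Matrix (Fin N) (Fin N) ℝ)
    (hPbarSym : Pbar.IsSymm) (hPbar : Pbar.PosDef)
    (hQbarSym : Qbar.IsSymm) (hQbar : Qbar.PosDef)
    (hLyapBar : Λᵀ * Pbar + Pbar * Λ = -Qbar)
    (lamQ lamQbar : ℝ)
    (hlamQ : IsGreatest {r : ℝ | ∀ x : Fin n → ℝ, r * (x ⬝ᵥ x) ≤ x ⬝ᵥ Q.mulVec x} lamQ)
    (hlamQbar : IsGreatest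
      {r : ℝ | ∀ x : Fin N → ℝ, r * (x ⬝ᵥ x) ≤ x ⬝ᵥ Qbar.mulVec x} lamQbar)
    (θstar : Fin N → ℝ)
    (hαbig : 4 * (P.mulVec b ⬝ᵥ P.mulVec b) * (θstar ⬝ᵥ θstar) / (lamQ * lamQbar) ≤ α)
    (e : ℝ → Fin n → ℝ) (θ φhat φtil : ℝ → Fin N → ℝ)
    (ey : ℝ → ℝ) (hey : ∀ t, ey t = c ⬝ᵥ e t)
    (hde : ∀ t, t₀ ≤ t → HasDerivAt e
      (A.mulVec (e t) + ((θ t - θstar) ⬝ᵥ φhat t) • b + (θstar ⬝ᵥ φtil t) • b) t)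
    (hdφ : ∀ t, t₀ ≤ t → HasDerivAt φtil (Λ.mulVec (φtil t)) t)
    (hdθ : ∀ t, t₀ ≤ t → HasDerivAt θ ((-(γ * ey t)) • φhat t) t)
    (V : ℝ → ℝ)
    (hV : ∀ t, V t = γ⁻¹ * ((θ t - θstar) ⬝ᵥ (θ t - θstar))
      + e t ⬝ᵥ P.mulVec (e t) + α * (φtil t ⬝ᵥ Pbar.mulVec (φtil t))) :
    (MeasureTheory.IntegrableOn (fun t => e t ⬝ᵥ Q.mulVec (e t)) (Set.Ici t₀) ∧
      ∫ t in Set.Ici t₀, e t ⬝ᵥ Q.mulVec (e t) ≤ 2 * V t₀) ∧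
    (MeasureTheory.IntegrableOn (fun t => φtil t ⬝ᵥ Qbar.mulVec (φtil t)) (Set.Ici t₀) ∧
      ∫ t in Set.Ici t₀, φtil t ⬝ᵥ Qbar.mulVec (φtil t) ≤ 2 * V t₀ / α) ∧
    (MeasureTheory.IntegrableOn (fun t => e t ⬝ᵥ e t) (Set.Ici t₀) ∧
      ∫ t in Set.Ici t₀, e t ⬝ᵥ e t ≤ 2 * V t₀ / lamQ) ∧
    (MeasureTheory.IntegrableOn (fun t => φtil t ⬝ᵥ φtil t) (Set.Ici t₀) ∧
      ∫ t in Set.Ici t₀, φtil t ⬝ᵥ φtil t ≤ 2 * V t₀ / (α * lamQbar)) := by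
  
  classical
  have hlamQpos : 0 < lamQ := lam_pos' hQ hlamQ
  have hlamQbarpos : 0 < lamQbar := lam_pos' hQbar hlamQbar
  have hQnn : ∀ x : Fin n → ℝ, 0 ≤ x ⬝ᵥ Q.mulVec x := fun x =>
    le_trans (mul_nonneg hlamQpos.le (dot_self_nonneg' x)) (hlamQ.1 x)
  have hQbarnn : ∀ x : Fin N → ℝ, 0 ≤ x ⬝ᵥ Qbar.mulVec x := fun x =>
    le_trans (mul_nonneg hlamQbarpos.le (dot_self_nonneg' x)) (hlamQbar.1 x)
  have hPnn : ∀ x : Fin n → ℝ, 0 ≤ x ⬝ᵥ P.mulVec x := by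
    intro x
    rcases eq_or_ne x 0 with h | h
    · simp [h]
    · have := hP.dotProduct_mulVec_pos h
      simp only [RCLike.re_to_real, star_trivial] at this
      exact le_of_lt (by simpa using this)
  have hPbarnn : ∀ x : Fin N → ℝ, 0 ≤ x ⬝ᵥ Pbar.mulVec x := by
    intro x
    rcases eq_or_ne x 0 with h | h
    · simp [h]
    · have := hPbar.dotProduct_mulVec_pos h
      simp only [RCLike.re_to_real, star_trivial] at this
      exact le_of_lt (by simpa using this)
  have hVnn : ∀ t, 0 ≤ V t := by
    intro t
    rw [hV]
    have h1 := dot_self_nonneg' (θ t - θstar)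
    have h2 := hPnn (e t)
    have h3 := hPbarnn (φtil t)
    have hγ' : (0:ℝ) ≤ γ⁻¹ := inv_nonneg.mpr hγ.le
    have := mul_nonneg hγ' h1
    have := mul_nonneg hα.le h3
    linarith
  -- Lyapunov quadratic identity
  have lyapid : ∀ (m : ℕ) (A₁ P₁ Q₁ : Matrix (Fin m) (Fin m) ℝ), A₁ᵀ * P₁ + P₁ * A₁ = -Q₁ →
      ∀ x : Fin m → ℝ, (A₁.mulVec x) ⬝ᵥ P₁.mulVec x + x ⬝ᵥ P₁.mulVec (A₁.mulVec x)
        = -(x ⬝ᵥ Q₁.mulVec x) := by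
    intro m A₁ P₁ Q₁ hL x
    have h1 : x ⬝ᵥ ((A₁ᵀ * P₁ + P₁ * A₁).mulVec x) = x ⬝ᵥ ((-Q₁).mulVec x) := by rw [hL]
    rw [add_mulVec, dotProduct_add, neg_mulVec, dotProduct_neg] at h1
    rw [← h1]
    congr 1
    · rw [← mulVec_mulVec, dotProduct_mulVec x A₁ᵀ _, vecMul_transpose]
    · rw [← mulVec_mulVec]
  set g : ℝ → ℝ := fun t => -(e t ⬝ᵥ Q.mulVec (e t))
      + 2 * ((θstar ⬝ᵥ φtil t) * ey t)
      - α * (φtil t ⬝ᵥ Qbar.mulVec (φtil t)) with hgdef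
  set W : ℝ → ℝ := fun t => 1 / 2 * (e t ⬝ᵥ Q.mulVec (e t))
      + α / 2 * (φtil t ⬝ᵥ Qbar.mulVec (φtil t)) with hWdef
  -- derivative of V
  have hdV : ∀ t, t₀ ≤ t → HasDerivAt V (g t) t := by
    intro t ht
    have hθ' := hdθ t ht
    have he' := hde t ht
    have hφ' := hdφ t ht
    have hΘ : HasDerivAt (fun s => θ s - θstar) ((-(γ * ey t)) • φhat t) t :=
      hθ'.sub_const θstar
    have h1 := hasDerivAt_dot' hΘ hΘ
    have h2 := hasDerivAt_dot' he' (hasDerivAt_mulVec' P he')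
    have h3 := hasDerivAt_dot' hφ' (hasDerivAt_mulVec' Pbar hφ')
    have hsum := ((h1.const_mul γ⁻¹).add h2).add (h3.const_mul α)
    have hVfun : V = fun t => γ⁻¹ * ((θ t - θstar) ⬝ᵥ (θ t - θstar))
        + e t ⬝ᵥ P.mulVec (e t) + α * (φtil t ⬝ᵥ Pbar.mulVec (φtil t)) := funext hV
    rw [hVfun]
    refine hsum.congr_deriv ?_
    have hsymPb : b ⬝ᵥ P.mulVec (e t) = e t ⬝ᵥ P.mulVec b := dot_mulVec_comm' hPsym b (e t)
    have hkey : e t ⬝ᵥ P.mulVec b = ey t := by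
      rw [hPb, dotProduct_comm, ← hey t]
    have hldP := lyapid n A P Q hLyap (e t)
    have hldΛ := lyapid N Λ Pbar Qbar hLyapBar (φtil t)
    have e1 : γ⁻¹ * (((-(γ * ey t)) • φhat t) ⬝ᵥ (θ t - θstar)
        + (θ t - θstar) ⬝ᵥ ((-(γ * ey t)) • φhat t))
        = -2 * ey t * ((θ t - θstar) ⬝ᵥ φhat t) := by
      rw [smul_dotProduct, dotProduct_smul, dotProduct_comm (φhat t)]
      field_simp
      ring
    have e2 : (A.mulVec (e t) + ((θ t - θstar) ⬝ᵥ φhat t) • b + (θstar ⬝ᵥ φtil t) • b)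
          ⬝ᵥ P.mulVec (e t)
        + e t ⬝ᵥ P.mulVec (A.mulVec (e t) + ((θ t - θstar) ⬝ᵥ φhat t) • b
          + (θstar ⬝ᵥ φtil t) • b)
        = -(e t ⬝ᵥ Q.mulVec (e t)) + 2 * (((θ t - θstar) ⬝ᵥ φhat t) * ey t)
          + 2 * ((θstar ⬝ᵥ φtil t) * ey t) := by
      simp only [add_dotProduct, smul_dotProduct, mulVec_add, mulVec_smul,
        dotProduct_add, dotProduct_smul, smul_eq_mul]
      rw [hsymPb, hkey]
      linear_combination hldP
    have e3 : α * ((Λ.mulVec (φtil t)) ⬝ᵥ Pbar.mulVec (φtil t)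
        + φtil t ⬝ᵥ Pbar.mulVec (Λ.mulVec (φtil t)))
        = -α * (φtil t ⬝ᵥ Qbar.mulVec (φtil t)) := by
      linear_combination α * hldΛ
    rw [e1, e2, e3]
    simp only [hgdef]
    ring
  -- pointwise bound on g
  have hg_le : ∀ t, g t ≤ -W t := by
    intro t
    have heyPb : ey t = (P.mulVec b) ⬝ᵥ e t := by rw [hey t, ← hPb]
    have hk : (ey t) ^ 2 ≤ (P.mulVec b ⬝ᵥ P.mulVec b) * (e t ⬝ᵥ e t) := by
      rw [heyPb]; exact dot_sq_le' _ _
    have hs : (θstar ⬝ᵥ φtil t) ^ 2 ≤ (θstar ⬝ᵥ θstar) * (φtil t ⬝ᵥ φtil t) :=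
      dot_sq_le' _ _
    have hbig' : 4 * (P.mulVec b ⬝ᵥ P.mulVec b) * (θstar ⬝ᵥ θstar)
        ≤ α * (lamQ * lamQbar) := by
      rw [div_le_iff₀ (by positivity)] at hαbig
      linarith
    have hkey := key_ineq' (dot_self_nonneg' (e t)) (dot_self_nonneg' (φtil t))
      (dot_self_nonneg' (P.mulVec b)) (dot_self_nonneg' θstar)
      hk hs (hlamQ.1 (e t)) (hlamQbar.1 (φtil t)) hlamQpos hlamQbarpos hα hbig'
    simp only [hgdef, hWdef]
    linarith
  -- continuity
  have hce : ContinuousOn e (Set.Ici t₀) := fun t ht =>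
    (hde t ht).continuousAt.continuousWithinAt
  have hcφ : ContinuousOn φtil (Set.Ici t₀) := fun t ht =>
    (hdφ t ht).continuousAt.continuousWithinAt
  have hcEQ : ContinuousOn (fun t => e t ⬝ᵥ Q.mulVec (e t)) (Set.Ici t₀) :=
    (cont_quad' Q).comp_continuousOn hce
  have hcFQ : ContinuousOn (fun t => φtil t ⬝ᵥ Qbar.mulVec (φtil t)) (Set.Ici t₀) :=
    (cont_quad' Qbar).comp_continuousOn hcφ
  have hcEE : ContinuousOn (fun t => e t ⬝ᵥ e t) (Set.Ici t₀) :=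
    cont_dotself'.comp_continuousOn hce
  have hcFF : ContinuousOn (fun t => φtil t ⬝ᵥ φtil t) (Set.Ici t₀) :=
    cont_dotself'.comp_continuousOn hcφ
  have hcW : ContinuousOn W (Set.Ici t₀) :=
    (continuousOn_const.mul hcEQ).add (continuousOn_const.mul hcFQ)
  have hcg : ContinuousOn g (Set.Ici t₀) := by
    have hg2 : g = fun t => -(e t ⬝ᵥ Q.mulVec (e t))
        + 2 * ((θstar ⬝ᵥ φtil t) * (c ⬝ᵥ e t))
        - α * (φtil t ⬝ᵥ Qbar.mulVec (φtil t)) := by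
      funext t
      simp only [hgdef, hey t]
    rw [hg2]
    exact (hcEQ.neg.add (continuousOn_const.mul
      (((cont_dotl' θstar).comp_continuousOn hcφ).mul
        ((cont_dotl' c).comp_continuousOn hce)))).sub (continuousOn_const.mul hcFQ)
  -- integral bound on W
  have hWb : ∀ T, t₀ ≤ T → (∫ t in t₀..T, W t) ≤ V t₀ := by
    intro T hT
    have hsub : Set.uIcc t₀ T ⊆ Set.Ici t₀ := by
      rw [Set.uIcc_of_le hT]; exact fun x hx => hx.1
    have hgint : IntervalIntegrable g volume t₀ T :=
      (hcg.mono hsub).intervalIntegrable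
    have hWint : IntervalIntegrable W volume t₀ T :=
      (hcW.mono hsub).intervalIntegrable
    have hftc : (∫ t in t₀..T, g t) = V T - V t₀ :=
      integral_eq_sub_of_hasDerivAt (fun x hx => hdV x (hsub hx)) hgint
    have hmono : (∫ t in t₀..T, W t) ≤ ∫ t in t₀..T, -g t :=
      integral_mono_on hT hWint hgint.neg (fun x _ => by linarith [hg_le x])
    rw [intervalIntegral.integral_neg, hftc] at hmono
    linarith [hVnn T]
  have hWVnn : 0 ≤ V t₀ := hVnn t₀
  -- generic machinery
  have mk : ∀ (f : ℝ → ℝ) (κ : ℝ), 0 ≤ κ → ContinuousOn f (Set.Ici t₀) →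
      (∀ t, 0 ≤ f t) → (∀ t, f t ≤ κ * W t) →
      IntegrableOn f (Set.Ici t₀) ∧ (∫ t in Set.Ici t₀, f t) ≤ κ * V t₀ := by
    intro f κ hκ hcf hfnn hfW
    apply integrable_of_bounds' t₀ (κ * V t₀) f hcf hfnn
    intro T hT
    have hsub : Set.uIcc t₀ T ⊆ Set.Ici t₀ := by
      rw [Set.uIcc_of_le hT]; exact fun x hx => hx.1
    have hfint : IntervalIntegrable f volume t₀ T :=
      (hcf.mono hsub).intervalIntegrable
    have hWint : IntervalIntegrable W volume t₀ T :=
      (hcW.mono hsub).intervalIntegrable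
    have hmono : (∫ t in t₀..T, f t) ≤ ∫ t in t₀..T, κ * W t :=
      integral_mono_on hT hfint (hWint.const_mul κ) (fun x _ => hfW x)
    rw [intervalIntegral.integral_const_mul] at hmono
    exact le_trans hmono (mul_le_mul_of_nonneg_left (hWb T hT) hκ)
  have hW_nn : ∀ t, 0 ≤ W t := by
    intro t
    simp only [hWdef]
    have := hQnn (e t)
    have := hQbarnn (φtil t)
    have : 0 ≤ α / 2 * (φtil t ⬝ᵥ Qbar.mulVec (φtil t)) :=
      mul_nonneg (by positivity) (hQbarnn (φtil t))
    linarith [hQnn (e t)]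
  refine ⟨?_, ?_, ?_, ?_⟩
  · have h := mk (fun t => e t ⬝ᵥ Q.mulVec (e t)) 2 (by norm_num) hcEQ
      (fun t => hQnn (e t)) (fun t => by simp only [hWdef]; have := hQbarnn (φtil t); nlinarith)
    exact ⟨h.1, by linarith [h.2]⟩
  · have h := mk (fun t => φtil t ⬝ᵥ Qbar.mulVec (φtil t)) (2 / α) (by positivity) hcFQ
      (fun t => hQbarnn (φtil t))
      (fun t => by
        simp only [hWdef]
        have h1 := hQnn (e t)
        have h2 := hQbarnn (φtil t)
        rw [div_mul_eq_mul_div, le_div_iff₀ hα]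
        nlinarith)
    refine ⟨h.1, le_trans h.2 (le_of_eq (by ring))⟩
  · have h := mk (fun t => e t ⬝ᵥ e t) (2 / lamQ) (by positivity) hcEE
      (fun t => dot_self_nonneg' (e t))
      (fun t => by
        simp only [hWdef]
        have h1 := hlamQ.1 (e t)
        have h2 := hQbarnn (φtil t)
        rw [div_mul_eq_mul_div, le_div_iff₀ hlamQpos]
        nlinarith)
    refine ⟨h.1, le_trans h.2 (le_of_eq (by ring))⟩
  · have h := mk (fun t => φtil t ⬝ᵥ φtil t) (2 / (α * lamQbar)) (by positivity) hcFF
      (fun t => dot_self_nonneg' (φtil t))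
      (fun t => by
        simp only [hWdef]
        have h1 := hlamQbar.1 (φtil t)
        have h2 := hQnn (e t)
        rw [div_mul_eq_mul_div, le_div_iff₀ (by positivity : (0:ℝ) < α * lamQbar)]
        nlinarith)
    refine ⟨h.1, le_trans h.2 (le_of_eq (by ring))⟩
end

section
/- For the dynamical error model with the KYP/SPR conditions, the gradient update law θ̇ = −γ φ̂ e_y, and any α > 0, the continuous-time regret satisfies, for every T ≥ t₀, ∫_{t₀}^T e(t)ᵀQ e(t) dt − ∫_{t₀}^T δ(t) dt ≤ V(t₀) − V(T) ≤ V(t₀), where δ(t) = 2 e(t)ᵀP b (θ*ᵀφ̃(t)); i.e., the regret relative to the exponentially decaying perturbation δ is bounded by the finite constant V(t₀), uniformly in T. -/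
open Matrix

lemma aux_hasDerivAt_dot {k : ℕ} {f g : ℝ → Fin k → ℝ} {f' g' : Fin k → ℝ} {t : ℝ}
    (hf : HasDerivAt f f' t) (hg : HasDerivAt g g' t) :
    HasDerivAt (fun s => f s ⬝ᵥ g s) (f' ⬝ᵥ g t + f t ⬝ᵥ g') t := by
  simp only [dotProduct, ← Finset.sum_add_distrib]
  exact HasDerivAt.fun_sum fun i _ => ((hasDerivAt_pi.mp hf i).mul (hasDerivAt_pi.mp hg i))

lemma aux_hasDerivAt_mulVec {k : ℕ} (M : Matrix (Fin k) (Fin k) ℝ) {g : ℝ → Fin k → ℝ}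
    {g' : Fin k → ℝ} {t : ℝ} (hg : HasDerivAt g g' t) :
    HasDerivAt (fun s => M.mulVec (g s)) (M.mulVec g') t := by
  rw [hasDerivAt_pi]
  intro i
  simp only [mulVec, dotProduct]
  exact HasDerivAt.fun_sum fun j _ => (hasDerivAt_pi.mp hg j).const_mul (M i j)

lemma aux_contOn_dot {k : ℕ} {f g : ℝ → Fin k → ℝ} {s : Set ℝ}
    (hf : ContinuousOn f s) (hg : ContinuousOn g s) :
    ContinuousOn (fun t => f t ⬝ᵥ g t) s := by
  simp only [dotProduct]
  exact continuousOn_finset_sum _ fun i _ =>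
    ((continuous_apply i).comp_continuousOn hf).mul ((continuous_apply i).comp_continuousOn hg)

lemma aux_contOn_quad {k : ℕ} (M : Matrix (Fin k) (Fin k) ℝ) {f g : ℝ → Fin k → ℝ}
    {s : Set ℝ} (hf : ContinuousOn f s) (hg : ContinuousOn g s) :
    ContinuousOn (fun t => f t ⬝ᵥ M.mulVec (g t)) s := by
  simp only [dotProduct, mulVec]
  refine continuousOn_finset_sum _ fun i _ => ?_
  exact ((continuous_apply i).comp_continuousOn hf).mul
    (continuousOn_finset_sum _ fun j _ =>
      continuousOn_const.mul ((continuous_apply j).comp_continuousOn hg))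

lemma aux_lyap_pt {k : ℕ} {M P Q : Matrix (Fin k) (Fin k) ℝ}
    (h : Mᵀ * P + P * M = -Q) (x : Fin k → ℝ) :
    (M.mulVec x) ⬝ᵥ P.mulVec x + x ⬝ᵥ P.mulVec (M.mulVec x) = -(x ⬝ᵥ Q.mulVec x) := by
  have h1 : (M.mulVec x) ⬝ᵥ P.mulVec x = x ⬝ᵥ (Mᵀ * P).mulVec x := by
    rw [← mulVec_mulVec, dotProduct_mulVec x, vecMul_transpose, dotProduct_mulVec,
      ← dotProduct_mulVec]
  have h2 : x ⬝ᵥ P.mulVec (M.mulVec x) = x ⬝ᵥ (P * M).mulVec x := by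
    rw [mulVec_mulVec]
  rw [h1, h2, ← dotProduct_add, ← add_mulVec, h]
  simp [neg_mulVec]

lemma aux_sym_dot {k : ℕ} {P : Matrix (Fin k) (Fin k) ℝ} (hP : P.IsSymm)
    (x y : Fin k → ℝ) : x ⬝ᵥ P.mulVec y = y ⬝ᵥ P.mulVec x := by
  have hv : x ᵥ* P = P *ᵥ x := by
    conv_lhs => rw [← hP.eq]
    rw [vecMul_transpose]
  rw [dotProduct_mulVec, hv, dotProduct_comm]

lemma aux_psd {k : ℕ} {P : Matrix (Fin k) (Fin k) ℝ} (hP : P.PosDef) (x : Fin k → ℝ) :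
    0 ≤ x ⬝ᵥ P.mulVec x := by simpa using hP.posSemidef.dotProduct_mulVec_nonneg x

/-- For the dynamical error model with the KYP/SPR conditions, the gradient update
law `θ̇ = -γ φ̂ e_y`, and any `α > 0`, the continuous-time regret satisfies, for
every `T ≥ t₀`, `∫_{t₀}^T eᵀQe dt - ∫_{t₀}^T δ dt ≤ V(t₀) - V(T) ≤ V(t₀)`, where
`δ(t) = 2 e(t)ᵀPb (θ*ᵀφ̃(t))`: the regret relative to the exponentially decaying
perturbation `δ` is bounded by the finite constant `V(t₀)`, uniformly in `T`. -/
theorem kyp_constant_continuous_regret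
    {n N : ℕ} (t₀ γ α : ℝ) (hγ : 0 < γ) (hα : 0 < α)
    (A : Matrix (Fin n) (Fin n) ℝ) (b c : Fin n → ℝ)
    (P Q : Matrix (Fin n) (Fin n) ℝ)
    (hPsym : P.IsSymm) (hP : P.PosDef) (hQsym : Q.IsSymm) (hQ : Q.PosDef)
    (hLyap : Aᵀ * P + P * A = -Q) (hPb : P.mulVec b = c)
    (Λ Pbar Qbar : Matrix (Fin N) (Fin N) ℝ)
    (hPbarSym : Pbar.IsSymm) (hPbar : Pbar.PosDef)
    (hQbarSym : Qbar.IsSymm) (hQbar : Qbar.PosDef)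
    (hLyapBar : Λᵀ * Pbar + Pbar * Λ = -Qbar)
    (θstar : Fin N → ℝ)
    (e : ℝ → Fin n → ℝ) (θ φhat φtil : ℝ → Fin N → ℝ)
    (ey : ℝ → ℝ) (hey : ∀ t, ey t = c ⬝ᵥ e t)
    (hde : ∀ t, t₀ ≤ t → HasDerivAt e
      (A.mulVec (e t) + ((θ t - θstar) ⬝ᵥ φhat t) • b + (θstar ⬝ᵥ φtil t) • b) t)
    (hdφ : ∀ t, t₀ ≤ t → HasDerivAt φtil (Λ.mulVec (φtil t)) t)
    (hdθ : ∀ t, t₀ ≤ t → HasDerivAt θ ((-(γ * ey t)) • φhat t) t)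
    (V : ℝ → ℝ)
    (hV : ∀ t, V t = γ⁻¹ * ((θ t - θstar) ⬝ᵥ (θ t - θstar))
      + e t ⬝ᵥ P.mulVec (e t) + α * (φtil t ⬝ᵥ Pbar.mulVec (φtil t)))     (δ : ℝ → ℝ)
    (hδ : ∀ t, δ t = 2 * (e t ⬝ᵥ P.mulVec b) * (θstar ⬝ᵥ φtil t)) :
    ∀ T, t₀ ≤ T →
      (∫ t in t₀..T, e t ⬝ᵥ Q.mulVec (e t)) - (∫ t in t₀..T, δ t) ≤ V t₀ - V T ∧
      V t₀ - V T ≤ V t₀ := by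
  intro T hT
  have huIcc : Set.uIcc t₀ T = Set.Icc t₀ T := Set.uIcc_of_le hT
  -- the candidate derivative of V
  set W : ℝ → ℝ := fun t => -(e t ⬝ᵥ Q.mulVec (e t)) + δ t
      - α * (φtil t ⬝ᵥ Qbar.mulVec (φtil t)) with hW
  have key : ∀ t, t₀ ≤ t → HasDerivAt V (W t) t := by
    intro t ht
    have hθ' : HasDerivAt (fun s => θ s - θstar) ((-(γ * ey t)) • φhat t) t :=
      (hdθ t ht).sub_const θstar
    have hd1 := aux_hasDerivAt_dot hθ' hθ'
    have hd2 := aux_hasDerivAt_dot (hde t ht) (aux_hasDerivAt_mulVec P (hde t ht))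
    have hd3 := aux_hasDerivAt_dot (hdφ t ht) (aux_hasDerivAt_mulVec Pbar (hdφ t ht))
    have total := ((hd1.const_mul γ⁻¹).add hd2).add (hd3.const_mul α)
    have hVf : V = fun s => γ⁻¹ * ((θ s - θstar) ⬝ᵥ (θ s - θstar))
        + e s ⬝ᵥ P.mulVec (e s) + α * (φtil s ⬝ᵥ Pbar.mulVec (φtil s)) := funext hV
    rw [hVf]
    refine total.congr_deriv (Eq.symm ?_)
    have L1 := aux_lyap_pt hLyap (e t)
    have L2 := aux_lyap_pt hLyapBar (φtil t)
    have hp : e t ⬝ᵥ P.mulVec b = ey t := by rw [hPb, dotProduct_comm, ← hey]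
    have hp1 : b ⬝ᵥ P.mulVec (e t) = ey t := by rw [aux_sym_dot hPsym, hp]
    have hcomm : φhat t ⬝ᵥ (θ t - θstar) = (θ t - θstar) ⬝ᵥ φhat t := dotProduct_comm _ _
    have hγγ : γ⁻¹ * γ = 1 := inv_mul_cancel₀ hγ.ne'
    simp only [hW, hδ t, smul_dotProduct, dotProduct_smul, add_dotProduct, dotProduct_add,
      mulVec_add, mulVec_smul, smul_eq_mul]
    rw [hp, hp1, hcomm]
    linear_combination (-(1:ℝ)) * L1 - α * L2
      + 2 * ey t * ((θ t - θstar) ⬝ᵥ φhat t) * hγγ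
  -- continuity on [t₀, T]
  have hecont : ContinuousOn e (Set.uIcc t₀ T) := fun t ht =>
    ((hde t (by rw [huIcc] at ht; exact ht.1)).continuousAt).continuousWithinAt
  have hφcont : ContinuousOn φtil (Set.uIcc t₀ T) := fun t ht =>
    ((hdφ t (by rw [huIcc] at ht; exact ht.1)).continuousAt).continuousWithinAt
  have hδf : δ = fun t => 2 * (e t ⬝ᵥ P.mulVec b) * (θstar ⬝ᵥ φtil t) := funext hδ
  have hδcont : ContinuousOn δ (Set.uIcc t₀ T) := by
    rw [hδf]
    exact (continuousOn_const.mul (aux_contOn_quad P hecont continuousOn_const)).mul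
      (aux_contOn_dot continuousOn_const hφcont)
  have h1cont : ContinuousOn (fun t => e t ⬝ᵥ Q.mulVec (e t)) (Set.uIcc t₀ T) :=
    aux_contOn_quad Q hecont hecont
  have h3cont : ContinuousOn (fun t => φtil t ⬝ᵥ Qbar.mulVec (φtil t)) (Set.uIcc t₀ T) :=
    aux_contOn_quad Qbar hφcont hφcont
  have hWcont : ContinuousOn W (Set.uIcc t₀ T) :=
    (h1cont.neg.add hδcont).sub (continuousOn_const.mul h3cont)
  have hWint : IntervalIntegrable W MeasureTheory.volume t₀ T :=
    hWcont.intervalIntegrable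
  have h1int : IntervalIntegrable (fun t => e t ⬝ᵥ Q.mulVec (e t)) MeasureTheory.volume t₀ T :=
    h1cont.intervalIntegrable
  have hδint : IntervalIntegrable δ MeasureTheory.volume t₀ T := hδcont.intervalIntegrable
  have hGint : IntervalIntegrable (fun t => e t ⬝ᵥ Q.mulVec (e t) - δ t)
      MeasureTheory.volume t₀ T := h1int.sub hδint
  have hGQint : IntervalIntegrable
      (fun t => e t ⬝ᵥ Q.mulVec (e t) - δ t + α * (φtil t ⬝ᵥ Qbar.mulVec (φtil t)))
      MeasureTheory.volume t₀ T :=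
    hGint.add ((continuousOn_const.mul h3cont).intervalIntegrable)
  have hFTC : ∫ t in t₀..T, W t = V T - V t₀ :=
    intervalIntegral.integral_eq_sub_of_hasDerivAt
      (fun t ht => key t (by rw [huIcc] at ht; exact ht.1)) hWint
  have hVdiff : V t₀ - V T
      = ∫ t in t₀..T, (e t ⬝ᵥ Q.mulVec (e t) - δ t + α * (φtil t ⬝ᵥ Qbar.mulVec (φtil t))) := by
    have hneg : ∀ t, e t ⬝ᵥ Q.mulVec (e t) - δ t + α * (φtil t ⬝ᵥ Qbar.mulVec (φtil t))
        = -W t := by intro t; simp only [hW]; ring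
    simp only [hneg]
    rw [intervalIntegral.integral_neg, hFTC]
    ring
  constructor
  · have hmono : (∫ t in t₀..T, (e t ⬝ᵥ Q.mulVec (e t) - δ t))
        ≤ ∫ t in t₀..T, (e t ⬝ᵥ Q.mulVec (e t) - δ t
            + α * (φtil t ⬝ᵥ Qbar.mulVec (φtil t))) := by
      apply intervalIntegral.integral_mono_on hT hGint hGQint
      intro t _
      nlinarith [aux_psd hQbar (φtil t)]
    rw [intervalIntegral.integral_sub h1int hδint] at hmono
    rw [hVdiff]
    exact hmono
  · have hVT : 0 ≤ V T := by
      rw [hV T]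
      have n1 : (0:ℝ) ≤ (θ T - θstar) ⬝ᵥ (θ T - θstar) := by
        simp only [dotProduct]
        exact Finset.sum_nonneg fun i _ => mul_self_nonneg _
      have n2 := aux_psd hP (e T)
      have n3 := aux_psd hPbar (φtil T)
      have : (0:ℝ) < γ⁻¹ := by positivity
      nlinarith
    linarith
end

section
/- If Λ ∈ ℝ^{N×N} is Hurwitz (every eigenvalue of Λ over ℂ has strictly negative real part), then for every symmetric positive definite Q̄ ∈ ℝ^{N×N} there exists a symmetric positive definite P̄ ∈ ℝ^{N×N} satisfying the Lyapunov equation ΛᵀP̄ + P̄Λ = −Q̄; one such solution is P̄ = ∫₀^∞ exp(Λᵀt) Q̄ exp(Λt) dt. -/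
open Matrix

/- ## Auxiliary developments -/

section LyapunovAux
open NormedSpace Polynomial Filter Set MeasureTheory
open scoped Topology NNReal ENNReal

set_option linter.unusedSectionVars false
set_option linter.unusedVariables false
set_option linter.unusedTactic false
set_option linter.unusedRCasesPattern false
set_option maxHeartbeats 1000000

noncomputable def lyapFn {N : ℕ} (Λ Q : Matrix (Fin N) (Fin N) ℝ) (t : ℝ) :
    Matrix (Fin N) (Fin N) ℝ :=
  NormedSpace.exp (t • Λᵀ) * Q * NormedSpace.exp (t • Λ)


section SpecC
attribute [local instance] Matrix.linftyOpNormedRing Matrix.linftyOpNormedAlgebra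

variable {N : ℕ} [Nonempty (Fin N)]

private lemma eig_of_mem_spectrum {M : Matrix (Fin N) (Fin N) ℂ} {μ : ℂ}
    (hμ : μ ∈ spectrum ℂ M) : ∃ v : Fin N → ℂ, v ≠ 0 ∧ M *ᵥ v = μ • v := by
  rw [spectrum.mem_iff] at hμ
  rw [Matrix.isUnit_iff_isUnit_det, isUnit_iff_ne_zero, not_not] at hμ
  obtain ⟨v, hv0, hv⟩ := (Matrix.exists_mulVec_eq_zero_iff).2 hμ
  refine ⟨v, hv0, ?_⟩
  rw [Matrix.sub_mulVec] at hv
  have h1 : (algebraMap ℂ (Matrix (Fin N) (Fin N) ℂ)) μ *ᵥ v = μ • v := by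
    rw [Matrix.algebraMap_eq_diagonal]; ext i
    simp [Matrix.mulVec_diagonal, Pi.algebraMap_apply, Algebra.algebraMap_self_apply]
  rw [h1, sub_eq_zero] at hv
  exact hv.symm

private lemma exp_mulVec {M : Matrix (Fin N) (Fin N) ℂ} {μ : ℂ} {v : Fin N → ℂ}
    (hv : M *ᵥ v = μ • v) : (exp M) *ᵥ v = Complex.exp μ • v := by
  classical
  have hL : IsLinearMap ℂ (fun X : Matrix (Fin N) (Fin N) ℂ => X *ᵥ v) :=
    ⟨fun A B => Matrix.add_mulVec A B v, fun c A => Matrix.smul_mulVec c A v⟩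
  let L : Matrix (Fin N) (Fin N) ℂ →L[ℂ] (Fin N → ℂ) := (hL.mk' _).toContinuousLinearMap
  have hsum : Summable fun n : ℕ => ((n.factorial : ℂ)⁻¹) • M ^ n :=
    NormedSpace.expSeries_summable' (𝕂 := ℂ) M
  have h1 : L (exp M) = ∑' n : ℕ, L (((n.factorial : ℂ)⁻¹) • M ^ n) := by
    rw [NormedSpace.exp_eq_tsum ℂ]; exact L.map_tsum hsum
  have hpow : ∀ n : ℕ, (M ^ n) *ᵥ v = μ ^ n • v := by
    intro n
    induction n with
    | zero => simp
    | succ n ih =>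
      rw [pow_succ, ← Matrix.mulVec_mulVec, hv, Matrix.mulVec_smul, ih, smul_smul, pow_succ]
      ring_nf
  have h2 : ∀ n : ℕ, L (((n.factorial : ℂ)⁻¹) • M ^ n)
      = (((n.factorial : ℂ)⁻¹) * μ ^ n) • v := by
    intro n
    have : L (M ^ n) = μ ^ n • v := hpow n
    rw [L.map_smul, this, smul_smul]
  have h3 := tsum_congr (L := SummationFilter.unconditional ℕ) h2
  have hsum2 : Summable fun n : ℕ => ((n.factorial : ℂ)⁻¹) * μ ^ n := by
    simpa [smul_eq_mul] using NormedSpace.expSeries_summable' (𝕂 := ℂ) (𝔸 := ℂ) μ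
  have h4 := Summable.tsum_smul_const hsum2 v
  have h5 : (∑' n : ℕ, ((n.factorial : ℂ)⁻¹) * μ ^ n) = Complex.exp μ := by
    rw [Complex.exp_eq_exp_ℂ, NormedSpace.exp_eq_tsum ℂ]; simp [smul_eq_mul]
  show L (exp M) = Complex.exp μ • v
  rw [h1, h3, h4, h5]

private lemma aeval_mulVec {M : Matrix (Fin N) (Fin N) ℂ} {μ : ℂ} {v : Fin N → ℂ}
    (hv : M *ᵥ v = μ • v) (p : ℂ[X]) : (aeval M p) *ᵥ v = p.eval μ • v := by
  induction p using Polynomial.induction_on' with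
  | add p q hp hq => rw [map_add, Matrix.add_mulVec, hp, hq, eval_add, add_smul]
  | monomial n a =>
    rw [aeval_monomial, eval_monomial]
    have hpow : (M ^ n) *ᵥ v = μ ^ n • v := by
      induction n with
      | zero => simp
      | succ n ih =>
        rw [pow_succ, ← Matrix.mulVec_mulVec, hv, Matrix.mulVec_smul, ih, smul_smul, pow_succ]
        ring_nf
    rw [← Matrix.mulVec_mulVec, hpow, Matrix.mulVec_smul]
    have h1 : (algebraMap ℂ (Matrix (Fin N) (Fin N) ℂ)) a *ᵥ v = a • v := by
      rw [Matrix.algebraMap_eq_diagonal]; ext i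
      simp [Matrix.mulVec_diagonal, Pi.algebraMap_apply, Algebra.algebraMap_self_apply]
    rw [h1, smul_smul, mul_comm]

private lemma spectrum_exp_subset (M : Matrix (Fin N) (Fin N) ℂ) :
    ∀ c ∈ spectrum ℂ (exp M), ∃ μ ∈ spectrum ℂ M, c = Complex.exp μ := by
  classical
  -- exp M lies in the adjoin of M
  have hmem : exp M ∈ Algebra.adjoin ℂ ({M} : Set (Matrix (Fin N) (Fin N) ℂ)) := by
    set S := (Algebra.adjoin ℂ ({M} : Set (Matrix (Fin N) (Fin N) ℂ))).toSubmodule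
    have hclosed : IsClosed (S : Set (Matrix (Fin N) (Fin N) ℂ)) :=
      Submodule.closed_of_finiteDimensional S
    have hsum : Summable fun n : ℕ => ((n.factorial : ℂ)⁻¹) • M ^ n :=
      NormedSpace.expSeries_summable' (𝕂 := ℂ) M
    have htend := hsum.hasSum.tendsto_sum_nat
    have hmemS : ∀ n : ℕ, (∑ i ∈ Finset.range n, ((i.factorial : ℂ)⁻¹) • M ^ i) ∈ S := by
      intro n
      refine Submodule.sum_mem S fun i _ => Submodule.smul_mem S _ ?_
      exact Subalgebra.pow_mem _ (Algebra.subset_adjoin (Set.mem_singleton M)) i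
    have hexp : exp M = ∑' n : ℕ, ((n.factorial : ℂ)⁻¹) • M ^ n := by
      rw [NormedSpace.exp_eq_tsum ℂ]
    rw [hexp]
    exact hclosed.mem_of_tendsto htend (Filter.Eventually.of_forall hmemS)
  rw [Algebra.adjoin_singleton_eq_range_aeval] at hmem
  obtain ⟨p, hp'⟩ := hmem
  have hp : (aeval M) p = exp M := hp'
  intro c hc
  rw [← hp, spectrum.map_polynomial_aeval_of_nonempty M p (spectrum.nonempty M)] at hc
  obtain ⟨μ, hμ, hcμ⟩ := hc
  refine ⟨μ, hμ, ?_⟩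
  obtain ⟨v, hv0, hv⟩ := eig_of_mem_spectrum hμ
  have h1 : (aeval M p) *ᵥ v = p.eval μ • v := aeval_mulVec hv p
  have h2 : (aeval M p) *ᵥ v = Complex.exp μ • v := by rw [hp]; exact exp_mulVec hv
  have h3 : (p.eval μ - Complex.exp μ) • v = 0 := by rw [sub_smul, h1.symm.trans h2, sub_self]
  rcases smul_eq_zero.1 h3 with h | h
  · rw [← hcμ]; simpa using sub_eq_zero.1 h
  · exact absurd h hv0

/-- key decay estimate over ℂ -/
private lemma decayC (M : Matrix (Fin N) (Fin N) ℂ)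
    (hM : ∀ μ ∈ spectrum ℂ M, μ.re < 0) :
    ∃ C > 0, ∃ α > 0, ∀ t : ℝ, 0 ≤ t →
      ‖exp ((t : ℂ) • M)‖ ≤ C * Real.exp (-α * t) := by
  classical
  obtain ⟨μ₀, hμ₀, hmax⟩ := (spectrum.isCompact M).exists_isMaxOn (spectrum.nonempty M)
    (Complex.continuous_re.continuousOn)
  set α : ℝ := -μ₀.re / 2 with hα_def
  have hα : 0 < α := by have := hM μ₀ hμ₀; simp [hα_def]; linarith
  set B : Matrix (Fin N) (Fin N) ℂ :=
    algebraMap ℂ (Matrix (Fin N) (Fin N) ℂ) (α : ℂ) + M with hB_def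
  -- spectrum of B
  have hspecB : ∀ ν ∈ spectrum ℂ B, ν.re ≤ -α := by
    intro ν hν
    rw [← spectrum.singleton_add_eq] at hν
    obtain ⟨a, ha, μ, hμ, rfl⟩ := Set.mem_add.1 hν
    rw [Set.mem_singleton_iff] at ha; subst ha
    have h1 : μ.re ≤ μ₀.re := hmax hμ
    have : ((α : ℂ) + μ).re = α + μ.re := by simp
    rw [this]; rw [hα_def] at *; linarith
  -- spectral radius of exp B < 1
  have hrad : spectralRadius ℂ (exp B) < 1 := by
    have h1 : ∀ c ∈ spectrum ℂ (exp B), ‖c‖₊ < (1 : ℝ≥0) := by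
      intro c hc
      obtain ⟨ν, hν, rfl⟩ := spectrum_exp_subset B c hc
      have hlt : ‖Complex.exp ν‖ < 1 := by
        rw [Complex.norm_exp]
        exact Real.exp_lt_one_iff.2 (lt_of_le_of_lt (hspecB ν hν) (neg_neg_iff_pos.2 hα))
      rw [← coe_nnnorm, ← NNReal.coe_one, NNReal.coe_lt_coe] at hlt
      exact hlt
    have := spectrum.spectralRadius_lt_of_forall_lt (a := exp B) h1
    simpa using this
  -- bound on powers of exp B
  have hpowbnd : ∃ C₂ : ℝ, 0 < C₂ ∧ ∀ n : ℕ, ‖(exp B) ^ n‖ ≤ C₂ := by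
    have hg := spectrum.pow_nnnorm_pow_one_div_tendsto_nhds_spectralRadius (exp B)
    have hev := hg.eventually_lt_const hrad
    obtain ⟨n₀, hn₀⟩ := Filter.eventually_atTop.1 hev
    set m := max n₀ 1 with hm
    refine ⟨1 + ∑ i ∈ Finset.range m, ‖(exp B) ^ i‖, by positivity, fun n => ?_⟩
    rcases lt_or_ge n m with h | h
    · have h1 : ‖(exp B) ^ n‖ ≤ ∑ i ∈ Finset.range m, ‖(exp B) ^ i‖ :=
        Finset.single_le_sum (fun i _ => norm_nonneg _) (Finset.mem_range.2 h)
      linarith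
    · have hn1 : 1 ≤ n := le_trans (le_max_right _ _) h
      have h2 := hn₀ n (le_trans (le_max_left _ _) h)
      have hne : ((n : ℝ)) ≠ 0 := by positivity
      have h3 : (((‖(exp B) ^ n‖₊ : ℝ≥0∞)) ^ (1 / (n : ℝ))) ^ ((n : ℝ))
          = ((‖(exp B) ^ n‖₊ : ℝ≥0∞)) := by
        rw [← ENNReal.rpow_mul, one_div_mul_cancel hne, ENNReal.rpow_one]
      have h4 : ((‖(exp B) ^ n‖₊ : ℝ≥0∞)) ≤ 1 := by
        calc ((‖(exp B) ^ n‖₊ : ℝ≥0∞))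
            = (((‖(exp B) ^ n‖₊ : ℝ≥0∞)) ^ (1 / (n : ℝ))) ^ ((n : ℝ)) := h3.symm
          _ ≤ (1 : ℝ≥0∞) ^ ((n : ℝ)) := ENNReal.rpow_le_rpow h2.le (by positivity)
          _ = 1 := ENNReal.one_rpow _
      have h5 : ‖(exp B) ^ n‖₊ ≤ 1 := by exact_mod_cast h4
      have h6 : ‖(exp B) ^ n‖ ≤ 1 := h5
      linarith [Finset.sum_nonneg (fun i (_ : i ∈ Finset.range m) => norm_nonneg ((exp B) ^ i))]
  obtain ⟨C₂, hC₂, hC₂bnd⟩ := hpowbnd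
  -- bound on exp (s • B) on [0,1]
  have hcont1 : Continuous fun s : ℝ => exp ((s : ℂ) • B) :=
    (NormedSpace.exp_continuous (𝔸 := Matrix (Fin N) (Fin N) ℂ)).comp
      (Complex.continuous_ofReal.smul (continuous_const (y := B)))
  obtain ⟨C₁, hC₁⟩ := (isCompact_Icc (a := (0:ℝ)) (b := 1)).exists_bound_of_continuousOn
    hcont1.continuousOn
  refine ⟨max C₁ 1 * C₂, by positivity, α, hα, fun t ht => ?_⟩
  -- split t = s + n
  set n : ℕ := ⌊t⌋₊ with hn
  set s : ℝ := t - n with hs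
  have hs0 : 0 ≤ s := sub_nonneg.2 (Nat.floor_le ht)
  have hs1 : s ≤ 1 := by
    have := Nat.lt_floor_add_one t
    rw [hs]; push_cast; linarith
  have hts : s + (n : ℝ) = t := by rw [hs]; ring
  have hsplit : (t : ℂ) • B = (s : ℂ) • B + ((n : ℝ) : ℂ) • B := by
    rw [← add_smul, ← Complex.ofReal_add, hts]
  have hcomm : Commute ((s : ℂ) • B) (((n : ℝ) : ℂ) • B) :=
    ((Commute.refl B).smul_left _).smul_right _
  have hexp1 : exp ((t : ℂ) • B) = exp ((s : ℂ) • B) * exp (((n : ℝ) : ℂ) • B) := by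
    rw [hsplit, Matrix.exp_add_of_commute _ _ hcomm]
  have hexp2 : exp (((n : ℝ) : ℂ) • B) = (exp B) ^ n := by
    have : (((n : ℝ) : ℂ)) = ((n : ℕ) : ℂ) := by push_cast; ring
    rw [this, Nat.cast_smul_eq_nsmul, Matrix.exp_nsmul]
  have hBnorm : ‖exp ((t : ℂ) • B)‖ ≤ max C₁ 1 * C₂ := by
    rw [hexp1, hexp2]
    calc ‖exp ((s : ℂ) • B) * (exp B) ^ n‖
        ≤ ‖exp ((s : ℂ) • B)‖ * ‖(exp B) ^ n‖ := norm_mul_le _ _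
      _ ≤ max C₁ 1 * C₂ := by
          apply mul_le_mul _ (hC₂bnd n) (norm_nonneg _) (by positivity)
          exact le_trans (hC₁ s ⟨hs0, hs1⟩) (le_max_left _ _)
  -- relate exp (t M) to exp (t B)
  have hsmul1 : (t : ℂ) • B = (t : ℂ) • M + ((t * α : ℝ) : ℂ) • (1 : Matrix (Fin N) (Fin N) ℂ) := by
    rw [hB_def, smul_add, Algebra.algebraMap_eq_smul_one, smul_smul]
    push_cast
    ring_nf
    rw [add_comm]
  have hMsplit : (t : ℂ) • M = (t : ℂ) • B + ((-(t * α) : ℝ) : ℂ) • (1 : Matrix (Fin N) (Fin N) ℂ) := by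
    rw [hsmul1]; module
  have hcomm2 : Commute ((t : ℂ) • B) (((-(t * α) : ℝ) : ℂ) • (1 : Matrix (Fin N) (Fin N) ℂ)) :=
    (Commute.one_right _).smul_right _
  have hexpM : exp ((t : ℂ) • M)
      = exp ((t : ℂ) • B) * (Complex.exp ((-(t * α) : ℝ) : ℂ) • 1) := by
    rw [hMsplit, Matrix.exp_add_of_commute _ _ hcomm2]
    congr 1
    rw [← Algebra.algebraMap_eq_smul_one]
    exact (NormedSpace.algebraMap_exp_comm (𝔸 := Matrix (Fin N) (Fin N) ℂ) _).symm.trans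
      (by rw [Complex.exp_eq_exp_ℂ, Algebra.algebraMap_eq_smul_one])
  rw [hexpM]
  have h6 : exp ((t : ℂ) • B) * (Complex.exp ((-(t * α) : ℝ) : ℂ) • 1)
      = Complex.exp ((-(t * α) : ℝ) : ℂ) • exp ((t : ℂ) • B) := by
    rw [mul_smul_comm, mul_one]
  rw [h6, norm_smul]
  have h7 : ‖Complex.exp ((-(t * α) : ℝ) : ℂ)‖ = Real.exp (-(t * α)) := by
    rw [Complex.norm_exp]
    norm_num
  rw [h7]
  have h8 : Real.exp (-(t * α)) = Real.exp (-α * t) := by ring_nf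
  rw [h8, mul_comm (Real.exp (-α * t))]
  exact mul_le_mul_of_nonneg_right hBnorm (Real.exp_nonneg _)
end SpecC


section RealDecay
attribute [local instance] Matrix.linftyOpNormedRing Matrix.linftyOpNormedAlgebra

variable {N : ℕ} [Nonempty (Fin N)]

private lemma nnnorm_map_ofReal (A : Matrix (Fin N) (Fin N) ℝ) :
    ‖A.map (algebraMap ℝ ℂ)‖ = ‖A‖ := by
  have h1 : ‖A.map (algebraMap ℝ ℂ)‖₊ = ‖A‖₊ := by
    rw [Matrix.linfty_opNNNorm_def, Matrix.linfty_opNNNorm_def]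
    congr 1
    ext i
    congr 1
    ext j
    simp [Matrix.map_apply]
  calc ‖A.map (algebraMap ℝ ℂ)‖ = ((‖A.map (algebraMap ℝ ℂ)‖₊ : ℝ≥0) : ℝ) := rfl
    _ = ((‖A‖₊ : ℝ≥0) : ℝ) := by rw [h1]
    _ = ‖A‖ := rfl

private lemma entry_le_norm {R : Type*} [NormedRing R] (A : Matrix (Fin N) (Fin N) R) (i j : Fin N) :
    ‖A i j‖ ≤ ‖A‖ := by
  have h1 : ‖A i j‖₊ ≤ ‖A‖₊ := by
    rw [Matrix.linfty_opNNNorm_def]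
    calc ‖A i j‖₊ ≤ ∑ j', ‖A i j'‖₊ :=
          Finset.single_le_sum (f := fun j' => ‖A i j'‖₊) (fun j' _ => zero_le) (Finset.mem_univ j)
      _ ≤ _ := Finset.le_sup (f := fun i => ∑ j', ‖A i j'‖₊) (Finset.mem_univ i)
  exact h1

private lemma decayR (Λ : Matrix (Fin N) (Fin N) ℝ)
    (hΛ : ∀ μ ∈ spectrum ℂ (Λ.map (algebraMap ℝ ℂ)), μ.re < 0) :
    ∃ C > 0, ∃ α > 0, ∀ t : ℝ, 0 ≤ t → ‖exp (t • Λ)‖ ≤ C * Real.exp (-α * t) := by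
  set M := Λ.map (algebraMap ℝ ℂ) with hM_def
  obtain ⟨C, hC, α, hα, hbnd⟩ := decayC M hΛ
  refine ⟨C, hC, α, hα, fun t ht => ?_⟩
  have hmap : (exp (t • Λ)).map (algebraMap ℝ ℂ) = exp ((t : ℂ) • M) := by
    have hfc : Continuous fun A : Matrix (Fin N) (Fin N) ℝ => A.map (algebraMap ℝ ℂ) :=
      Continuous.matrix_map continuous_id Complex.continuous_ofReal
    have h1 := NormedSpace.map_exp ((algebraMap ℝ ℂ).mapMatrix) hfc (t • Λ)
    have h2 : (algebraMap ℝ ℂ).mapMatrix (t • Λ) = t • M := by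
      ext i j
      simp only [RingHom.mapMatrix_apply, Matrix.map_apply, Matrix.smul_apply, hM_def,
        smul_eq_mul, Complex.real_smul, _root_.map_mul]
      norm_num
    have h3 : (algebraMap ℝ ℂ).mapMatrix (exp (t • Λ)) = (exp (t • Λ)).map (algebraMap ℝ ℂ) := rfl
    replace h1 : (exp (t • Λ)).map (algebraMap ℝ ℂ) = exp ((algebraMap ℝ ℂ).mapMatrix (t • Λ)) := h1
    rw [h1, h2]
    rw [← algebraMap_smul ℂ t M]
    rfl
  calc ‖exp (t • Λ)‖ = ‖(exp (t • Λ)).map (algebraMap ℝ ℂ)‖ := (nnnorm_map_ofReal _).symm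
    _ = ‖exp ((t : ℂ) • M)‖ := by rw [hmap]
    _ ≤ C * Real.exp (-α * t) := hbnd t ht

private lemma spectrum_transpose (Λ : Matrix (Fin N) (Fin N) ℝ) :
    spectrum ℂ ((Λᵀ).map (algebraMap ℝ ℂ)) = spectrum ℂ (Λ.map (algebraMap ℝ ℂ)) := by
  have hmapT : (Λᵀ).map (algebraMap ℝ ℂ) = (Λ.map (algebraMap ℝ ℂ))ᵀ := rfl
  rw [hmapT]
  have key : ∀ μ : ℂ, ((algebraMap ℂ (Matrix (Fin N) (Fin N) ℂ)) μ - (Λ.map (algebraMap ℝ ℂ))ᵀ)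
      = ((algebraMap ℂ (Matrix (Fin N) (Fin N) ℂ)) μ - Λ.map (algebraMap ℝ ℂ))ᵀ := by
    intro μ
    rw [Matrix.transpose_sub]
    congr 1
    rw [Matrix.algebraMap_eq_diagonal, Matrix.diagonal_transpose]
  ext μ
  simp only [spectrum.mem_iff]
  rw [not_iff_not, Matrix.isUnit_iff_isUnit_det, Matrix.isUnit_iff_isUnit_det, key,
    Matrix.det_transpose]

end RealDecay

section MainAux
attribute [local instance] Matrix.linftyOpNormedRing Matrix.linftyOpNormedAlgebra

variable {N : ℕ} [Nonempty (Fin N)]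

private noncomputable def ceA : ContinuousENorm (Matrix (Fin N) (Fin N) ℝ) :=
  SeminormedAddGroup.toContinuousENorm
private def pmA : TopologicalSpace.PseudoMetrizableSpace (Matrix (Fin N) (Fin N) ℝ) :=
  TopologicalSpace.pseudoMetrizableSpace_pi
attribute [local instance] ceA pmA

private noncomputable def evalCLM (i j : Fin N) :
    Matrix (Fin N) (Fin N) ℝ →L[ℝ] ℝ :=
  (IsLinearMap.mk' (fun X : Matrix (Fin N) (Fin N) ℝ => X i j)
    ⟨fun A B => rfl, fun c A => Matrix.smul_apply c A i j⟩).toContinuousLinearMap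

private noncomputable def quadCLM (x : Fin N → ℝ) :
    Matrix (Fin N) (Fin N) ℝ →L[ℝ] ℝ :=
  (IsLinearMap.mk' (fun X : Matrix (Fin N) (Fin N) ℝ => x ⬝ᵥ (X *ᵥ x))
    ⟨fun A B => by rw [Matrix.add_mulVec, dotProduct_add],
     fun c A => by rw [Matrix.smul_mulVec, dotProduct_smul, smul_eq_mul]⟩
    ).toContinuousLinearMap

private lemma existsP (Λ : Matrix (Fin N) (Fin N) ℝ)
    (hΛ : ∀ μ ∈ spectrum ℂ (Λ.map (algebraMap ℝ ℂ)), μ.re < 0)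
    (Q : Matrix (Fin N) (Fin N) ℝ) (hQsym : Q.IsSymm) (hQ : Q.PosDef) :
    (Continuous (lyapFn Λ Q)) ∧
    (∃ K > 0, ∃ α > 0, ∀ t : ℝ, 0 ≤ t → ∀ i j, |lyapFn Λ Q t i j| ≤ K * Real.exp (-α * t)) ∧
    ∃ P : Matrix (Fin N) (Fin N) ℝ, P.IsSymm ∧ P.PosDef ∧ Λᵀ * P + P * Λ = -Q ∧
      ∀ i j, P i j = ∫ t in Set.Ioi (0:ℝ), lyapFn Λ Q t i j := by
  classical
  -- continuity
  have hcontA : Continuous fun t : ℝ => exp (t • Λ) :=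
    (NormedSpace.exp_continuous (𝔸 := Matrix (Fin N) (Fin N) ℝ)).comp
      (continuous_id.smul continuous_const)
  have hcontAT : Continuous fun t : ℝ => exp (t • Λᵀ) :=
    (NormedSpace.exp_continuous (𝔸 := Matrix (Fin N) (Fin N) ℝ)).comp
      (continuous_id.smul continuous_const)
  have hcontF : Continuous (lyapFn Λ Q) := by
    show Continuous fun t : ℝ => exp (t • Λᵀ) * Q * exp (t • Λ)
    exact (hcontAT.mul continuous_const).mul hcontA
  -- decay bound
  obtain ⟨C1, hC1, α1, hα1, h1⟩ := decayR Λᵀ (by rw [spectrum_transpose Λ]; exact hΛ)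
  obtain ⟨C2, hC2, α2, hα2, h2⟩ := decayR Λ hΛ
  set α : ℝ := min α1 α2 with hα_def
  have hα : 0 < α := lt_min hα1 hα2
  set K : ℝ := C1 * (‖Q‖ + 1) * C2 with hK_def
  have hK : 0 < K := by positivity
  have hKb : ∀ t : ℝ, 0 ≤ t → ‖lyapFn Λ Q t‖ ≤ K * Real.exp (-α * t) := by
    intro t ht
    have e1 : Real.exp (-α1 * t) ≤ Real.exp (-α * t) := by
      apply Real.exp_le_exp.2
      have : α ≤ α1 := min_le_left _ _
      nlinarith
    have e2 : Real.exp (-α2 * t) ≤ 1 := by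
      apply Real.exp_le_one_iff.2
      nlinarith
    show ‖exp (t • Λᵀ) * Q * exp (t • Λ)‖ ≤ K * Real.exp (-α * t)
    calc ‖exp (t • Λᵀ) * Q * exp (t • Λ)‖
        ≤ ‖exp (t • Λᵀ) * Q‖ * ‖exp (t • Λ)‖ := norm_mul_le _ _
      _ ≤ (‖exp (t • Λᵀ)‖ * ‖Q‖) * ‖exp (t • Λ)‖ :=
          mul_le_mul_of_nonneg_right (norm_mul_le _ _) (norm_nonneg _)
      _ ≤ ((C1 * Real.exp (-α1 * t)) * (‖Q‖ + 1)) * (C2 * Real.exp (-α2 * t)) := by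
          apply mul_le_mul _ (h2 t ht) (norm_nonneg _) (by positivity)
          apply mul_le_mul (h1 t ht) (by linarith) (norm_nonneg _) (by positivity)
      _ ≤ K * Real.exp (-α * t) := by
          rw [hK_def]
          calc (C1 * Real.exp (-α1 * t)) * (‖Q‖ + 1) * (C2 * Real.exp (-α2 * t))
              = (C1 * (‖Q‖ + 1) * C2) * (Real.exp (-α1 * t) * Real.exp (-α2 * t)) := by ring
            _ ≤ (C1 * (‖Q‖ + 1) * C2) * (Real.exp (-α * t) * 1) := by
                apply mul_le_mul_of_nonneg_left _ (by positivity)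
                exact mul_le_mul e1 e2 (Real.exp_nonneg _) (Real.exp_nonneg _)
            _ = (C1 * (‖Q‖ + 1) * C2) * Real.exp (-α * t) := by ring
  have hentrybnd : ∀ t : ℝ, 0 ≤ t → ∀ i j, |lyapFn Λ Q t i j| ≤ K * Real.exp (-α * t) :=
    fun t ht i j => le_trans (entry_le_norm (R := ℝ) (lyapFn Λ Q t) i j) (hKb t ht)
  -- integrability
  have hgInt : IntegrableOn (fun t : ℝ => K * Real.exp (-α * t)) (Ioi (0:ℝ)) :=
    (exp_neg_integrableOn_Ioi 0 hα).const_mul K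
  have hInt : IntegrableOn (lyapFn Λ Q) (Ioi (0:ℝ)) := by
    apply Integrable.mono' hgInt hcontF.aestronglyMeasurable.restrict
    exact (ae_restrict_iff' measurableSet_Ioi).2 (ae_of_all _ fun t ht => hKb t (le_of_lt ht))
  -- derivative
  have hderiv : ∀ t : ℝ, HasDerivAt (lyapFn Λ Q)
      (Λᵀ * lyapFn Λ Q t + lyapFn Λ Q t * Λ) t := by
    intro t
    have hd1 : HasDerivAt (fun u : ℝ => exp (u • Λᵀ)) (Λᵀ * exp (t • Λᵀ)) t :=
      hasDerivAt_exp_smul_const' (𝕂 := ℝ) Λᵀ t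
    have hd2 : HasDerivAt (fun u : ℝ => exp (u • Λ)) (exp (t • Λ) * Λ) t :=
      hasDerivAt_exp_smul_const (𝕂 := ℝ) Λ t
    have h3 := (hd1.mul_const Q).mul hd2
    have e : Λᵀ * exp (t • Λᵀ) * Q * exp (t • Λ)
        + exp (t • Λᵀ) * Q * (exp (t • Λ) * Λ)
        = Λᵀ * (exp (t • Λᵀ) * Q * exp (t • Λ))
        + (exp (t • Λᵀ) * Q * exp (t • Λ)) * Λ := by
      simp only [mul_assoc]
    rw [e] at h3
    exact h3
  -- limit at infinity
  have htend : Tendsto (lyapFn Λ Q) atTop (𝓝 0) := by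
    apply squeeze_zero_norm' (Filter.eventually_atTop.2 ⟨0, fun t ht => hKb t ht⟩)
    have l1 : Tendsto (fun t : ℝ => -(α * t)) atTop atBot :=
      (tendsto_neg_atTop_atBot).comp (tendsto_id.const_mul_atTop hα)
    have l2 : Tendsto (fun t : ℝ => Real.exp (-α * t)) atTop (𝓝 0) := by
      rw [show (fun t : ℝ => Real.exp (-α * t)) = Real.exp ∘ (fun t : ℝ => -(α * t)) from
        funext fun t => by rw [Function.comp_apply, neg_mul]]
      exact Real.tendsto_exp_atBot.comp l1
    have := l2.const_mul K
    simpa using this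
  -- value at 0
  have hf0 : lyapFn Λ Q 0 = Q := by
    show exp ((0:ℝ) • Λᵀ) * Q * exp ((0:ℝ) • Λ) = Q
    rw [zero_smul, zero_smul, NormedSpace.exp_zero, one_mul, mul_one]
  -- the Lyapunov operator as CLM
  set L : Matrix (Fin N) (Fin N) ℝ →L[ℝ] Matrix (Fin N) (Fin N) ℝ :=
    (LinearMap.mulLeft ℝ Λᵀ + LinearMap.mulRight ℝ Λ).toContinuousLinearMap with hL_def
  have hLapp : ∀ X, L X = Λᵀ * X + X * Λ := fun X => rfl
  have hIntD : IntegrableOn (fun t => Λᵀ * lyapFn Λ Q t + lyapFn Λ Q t * Λ) (Ioi (0:ℝ)) := by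
    have := L.integrable_comp hInt
    exact this
  have hFTC : (∫ t in Ioi (0:ℝ), (Λᵀ * lyapFn Λ Q t + lyapFn Λ Q t * Λ)) = -Q := by
    have := integral_Ioi_of_hasDerivAt_of_tendsto' (fun t _ => hderiv t) hIntD htend
    rw [this, hf0, zero_sub]
  set P : Matrix (Fin N) (Fin N) ℝ := ∫ t in Ioi (0:ℝ), lyapFn Λ Q t with hP_def
  have heq : Λᵀ * P + P * Λ = -Q := by
    have hcomm := L.integral_comp_comm hInt
    rw [← hLapp P, hP_def]
    exact hcomm.symm.trans hFTC
  have hentry : ∀ i j, P i j = ∫ t in Ioi (0:ℝ), lyapFn Λ Q t i j := by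
    intro i j
    have := (evalCLM i j).integral_comp_comm hInt
    exact this.symm
  -- symmetry of the integrand
  have hfsymm : ∀ t : ℝ, (lyapFn Λ Q t)ᵀ = lyapFn Λ Q t := by
    intro t
    show (exp (t • Λᵀ) * Q * exp (t • Λ))ᵀ = exp (t • Λᵀ) * Q * exp (t • Λ)
    rw [Matrix.transpose_mul, Matrix.transpose_mul]
    have e1 : (exp (t • Λ))ᵀ = exp (t • Λᵀ) := by
      rw [← Matrix.exp_transpose, Matrix.transpose_smul]
    have e2 : (exp (t • Λᵀ))ᵀ = exp (t • Λ) := by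
      rw [← Matrix.exp_transpose, Matrix.transpose_smul, Matrix.transpose_transpose]
    rw [e1, e2, hQsym.eq, mul_assoc]
  have hPsymm : P.IsSymm := by
    show Pᵀ = P
    ext i j
    rw [Matrix.transpose_apply, hentry j i, hentry i j]
    have hji : (fun t : ℝ => lyapFn Λ Q t j i) = fun t : ℝ => lyapFn Λ Q t i j :=
      funext fun t => by
        rw [show lyapFn Λ Q t j i = (lyapFn Λ Q t)ᵀ i j from rfl, hfsymm t]
    rw [hji]
  -- positive definiteness
  have hPposdef : P.PosDef := by
    refine Matrix.PosDef.of_dotProduct_mulVec_pos ?_ ?_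
    · rw [Matrix.IsHermitian, Matrix.conjTranspose_eq_transpose_of_trivial]
      exact hPsymm
    · intro x hx
      have hquad : star x ⬝ᵥ (P *ᵥ x) = ∫ t in Ioi (0:ℝ), x ⬝ᵥ (lyapFn Λ Q t *ᵥ x) := by
        rw [star_trivial]
        have := (quadCLM x).integral_comp_comm hInt
        exact this.symm
      have hgpos : ∀ t : ℝ, 0 < x ⬝ᵥ (lyapFn Λ Q t *ᵥ x) := by
        intro t
        set y : Fin N → ℝ := exp (t • Λ) *ᵥ x with hy_def
        have hy0 : y ≠ 0 := by
          intro hy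
          obtain ⟨u, hu⟩ := Matrix.isUnit_exp (t • Λ)
          have hinv : (↑u⁻¹ : Matrix (Fin N) (Fin N) ℝ) * exp (t • Λ) = 1 := by
            rw [← hu]; exact u.inv_mul
          have : x = 0 := by
            calc x = (1 : Matrix (Fin N) (Fin N) ℝ) *ᵥ x := (Matrix.one_mulVec x).symm
              _ = ((↑u⁻¹ : Matrix (Fin N) (Fin N) ℝ) * exp (t • Λ)) *ᵥ x := by rw [hinv]
              _ = (↑u⁻¹ : Matrix (Fin N) (Fin N) ℝ) *ᵥ (exp (t • Λ) *ᵥ x) := by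
                  rw [← Matrix.mulVec_mulVec]
              _ = 0 := by rw [← hy_def, hy, Matrix.mulVec_zero]
          exact hx this
        have hform : x ⬝ᵥ (lyapFn Λ Q t *ᵥ x) = y ⬝ᵥ (Q *ᵥ y) := by
          show x ⬝ᵥ ((exp (t • Λᵀ) * Q * exp (t • Λ)) *ᵥ x) = y ⬝ᵥ (Q *ᵥ y)
          rw [← Matrix.mulVec_mulVec, ← Matrix.mulVec_mulVec]
          rw [Matrix.dotProduct_mulVec x (exp (t • Λᵀ))]
          have e1 : exp (t • Λᵀ) = (exp (t • Λ))ᵀ := by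
            rw [← Matrix.exp_transpose, Matrix.transpose_smul]
          rw [e1, Matrix.vecMul_transpose, ← hy_def]
        rw [hform]
        have := hQ.dotProduct_mulVec_pos hy0
        rwa [star_trivial] at this
      have hgint : IntegrableOn (fun t => x ⬝ᵥ (lyapFn Λ Q t *ᵥ x)) (Ioi (0:ℝ)) :=
        (quadCLM x).integrable_comp hInt
      rw [hquad]
      rw [integral_pos_iff_support_of_nonneg_ae (ae_of_all _ fun t => (hgpos t).le) hgint]
      have hsupp : Function.support (fun t => x ⬝ᵥ (lyapFn Λ Q t *ᵥ x)) = Set.univ :=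
        Set.eq_univ_of_forall fun t => (hgpos t).ne'
      rw [hsupp, Measure.restrict_apply_univ, Real.volume_Ioi]
      exact ENNReal.zero_lt_top
  exact ⟨hcontF, ⟨K, hK, α, hα, hentrybnd⟩, P, hPsymm, hPposdef, heq, hentry⟩

end MainAux

end LyapunovAux

section FinalAux
set_option maxHeartbeats 1000000
open NormedSpace Filter Set MeasureTheory
open scoped Topology

attribute [local instance] Matrix.normedAddCommGroup Matrix.normedSpace


private noncomputable def evalCLMsup {N : ℕ} (i j : Fin N) :
    Matrix (Fin N) (Fin N) ℝ →L[ℝ] ℝ :=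
  (IsLinearMap.mk' (fun X : Matrix (Fin N) (Fin N) ℝ => X i j)
    ⟨fun A B => rfl, fun c A => Matrix.smul_apply c A i j⟩).toContinuousLinearMap


end FinalAux

attribute [local instance] Matrix.normedAddCommGroup Matrix.normedSpace

private noncomputable def ceB {N : ℕ} : ContinuousENorm (Matrix (Fin N) (Fin N) ℝ) :=
  SeminormedAddGroup.toContinuousENorm
private def pmB {N : ℕ} : TopologicalSpace.PseudoMetrizableSpace (Matrix (Fin N) (Fin N) ℝ) :=
  TopologicalSpace.pseudoMetrizableSpace_pi
attribute [local instance] ceB pmB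

set_option maxHeartbeats 1000000 in
open NormedSpace Filter Set MeasureTheory in
/-- If `Λ ∈ ℝ^{N×N}` is Hurwitz (every complex eigenvalue has strictly negative
real part), then for every symmetric positive definite `Q̄` there exists a
symmetric positive definite `P̄` satisfying the Lyapunov equation
`ΛᵀP̄ + P̄Λ = -Q̄`; one such solution is `P̄ = ∫₀^∞ exp(Λᵀt) Q̄ exp(Λt) dt`. -/
theorem hurwitz_lyapunov_equation_solvable
    {N : ℕ} (Λ : Matrix (Fin N) (Fin N) ℝ)
    (hΛ : ∀ μ ∈ spectrum ℂ (Λ.map (algebraMap ℝ ℂ)), μ.re < 0)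
    (Qbar : Matrix (Fin N) (Fin N) ℝ) (hQbarSym : Qbar.IsSymm) (hQbar : Qbar.PosDef) :
    ∃ Pbar : Matrix (Fin N) (Fin N) ℝ,
      Pbar.IsSymm ∧ Pbar.PosDef ∧ Λᵀ * Pbar + Pbar * Λ = -Qbar ∧
      Pbar = ∫ t in Set.Ioi (0 : ℝ),
        NormedSpace.exp (t • Λᵀ) * Qbar * NormedSpace.exp (t • Λ) := by
  rcases Nat.eq_zero_or_pos N with hN | hN
  · subst hN
    refine ⟨∫ t in Set.Ioi (0:ℝ),
        NormedSpace.exp (t • Λᵀ) * Qbar * NormedSpace.exp (t • Λ),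
      Subsingleton.elim _ _, Matrix.PosDef.of_dotProduct_mulVec_pos (Subsingleton.elim _ _)
        fun x hx => absurd (Subsingleton.elim x 0) hx, Subsingleton.elim _ _, rfl⟩
  · haveI : Nonempty (Fin N) := Fin.pos_iff_nonempty.1 hN
    obtain ⟨hcont, ⟨K, hK, α, hα, hbnd⟩, P, hsym, hpd, heq, hentry⟩ :=
      existsP Λ hΛ Qbar hQbarSym hQbar
    have hIntSup : IntegrableOn (lyapFn Λ Qbar) (Set.Ioi (0:ℝ)) := by
      apply Integrable.mono' ((exp_neg_integrableOn_Ioi 0 hα).const_mul K)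
        hcont.aestronglyMeasurable.restrict
      refine (ae_restrict_iff' measurableSet_Ioi).2 (ae_of_all _ fun t ht => ?_)
      apply (Matrix.norm_le_iff (by positivity)).2
      intro i j
      rw [Real.norm_eq_abs]
      exact hbnd t ht.le i j
    have hPeq : (∫ t in Set.Ioi (0:ℝ), lyapFn Λ Qbar t) = P := by
      ext i j
      rw [hentry i j]
      exact ((evalCLMsup i j).integral_comp_comm hIntSup).symm
    exact ⟨∫ t in Set.Ioi (0:ℝ),
        NormedSpace.exp (t • Λᵀ) * Qbar * NormedSpace.exp (t • Λ),
      by rw [show (∫ t in Set.Ioi (0:ℝ),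
          NormedSpace.exp (t • Λᵀ) * Qbar * NormedSpace.exp (t • Λ))
          = (∫ t in Set.Ioi (0:ℝ), lyapFn Λ Qbar t) from rfl, hPeq]; exact hsym,
      by rw [show (∫ t in Set.Ioi (0:ℝ),
          NormedSpace.exp (t • Λᵀ) * Qbar * NormedSpace.exp (t • Λ))
          = (∫ t in Set.Ioi (0:ℝ), lyapFn Λ Qbar t) from rfl, hPeq]; exact hpd,
      by rw [show (∫ t in Set.Ioi (0:ℝ),
          NormedSpace.exp (t • Λᵀ) * Qbar * NormedSpace.exp (t • Λ))
          = (∫ t in Set.Ioi (0:ℝ), lyapFn Λ Qbar t) from rfl, hPeq]; exact heq, rfl⟩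
end

section
/- Persistent excitation implies parameter convergence for the gradient flow: suppose the regressor φ : [0,∞) → ℝ^N is bounded and continuous and is persistently exciting, i.e., there exist T₀ > 0 and α₀ > 0 such that for all t ≥ 0 and all unit vectors v ∈ ℝ^N, ∫_t^{t+T₀} (vᵀφ(s))² ds ≥ α₀. Then for any γ > 0 and any initial condition, the solution of θ̇(t) = −γ e_y(t) φ(t) with e_y(t) = ⟨θ(t) − θ*, φ(t)⟩ satisfies θ(t) → θ* as t → ∞ (the parameter error θ̃(t) = θ(t) − θ* converges to zero). -/
open scoped RealInnerProductSpace

open Filter MeasureTheory intervalIntegral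

-- Cauchy-Schwarz for interval integrals, elementary form
lemma cs_integral {f : ℝ → ℝ} {a b : ℝ} (hab : a ≤ b) (hf : ContinuousOn f (Set.Icc a b)) :
    (∫ u in a..b, |f u|) ^ 2 ≤ (b - a) * ∫ u in a..b, (f u) ^ 2 := by
  rcases eq_or_lt_of_le hab with rfl | hlt
  · simp
  · have hL : (0:ℝ) < b - a := by linarith
    have huIcc : Set.uIcc a b = Set.Icc a b := Set.uIcc_of_le hab
    have hfa : IntervalIntegrable (fun u => |f u|) MeasureTheory.volume a b := by
      apply ContinuousOn.intervalIntegrable; rw [huIcc]; exact hf.abs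
    have hf2 : IntervalIntegrable (fun u => (f u)^2) MeasureTheory.volume a b := by
      apply ContinuousOn.intervalIntegrable; rw [huIcc]; exact hf.pow 2
    set I := ∫ u in a..b, |f u| with hI
    set J := ∫ u in a..b, (f u)^2 with hJ
    set c := I / (b - a) with hc
    have key : 0 ≤ ∫ u in a..b, (|f u| - c)^2 :=
      intervalIntegral.integral_nonneg hab (fun u _ => sq_nonneg _)
    have expand : ∫ u in a..b, (|f u| - c)^2 = J - 2*c*I + c^2*(b-a) := by
      have : ∀ u, (|f u| - c)^2 = (f u)^2 - (2*c)*|f u| + c^2 := by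
        intro u; nlinarith [sq_abs (f u)]
      simp_rw [this]
      rw [intervalIntegral.integral_add (hf2.sub (hfa.const_mul _)) intervalIntegrable_const,
        intervalIntegral.integral_sub hf2 (hfa.const_mul _),
        intervalIntegral.integral_const_mul, intervalIntegral.integral_const]
      ring_nf
      ring
    rw [expand] at key
    have hcL : c * (b - a) = I := div_mul_cancel₀ _ hL.ne'
    nlinarith [mul_nonneg hL.le key, hcL]

set_option maxHeartbeats 2000000 in
/-- Persistent excitation implies parameter convergence for the gradient flow:
if the regressor `φ` is bounded, continuous, and persistently exciting (there
exist `T₀ > 0`, `α₀ > 0` such that `∫_t^{t+T₀} ⟪v, φ(s)⟫² ds ≥ α₀` for every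
`t ≥ 0` and every unit vector `v`), then for any `γ > 0` the solution of
`θ̇(t) = -γ e_y(t) φ(t)`, `e_y(t) = ⟪θ(t) - θ*, φ(t)⟫`, satisfies `θ(t) → θ*`
as `t → ∞`. -/
theorem persistent_excitation_parameter_convergence
    {N : ℕ} (γ : ℝ) (hγ : 0 < γ)
    (θstar : EuclideanSpace ℝ (Fin N))
    (φ θ : ℝ → EuclideanSpace ℝ (Fin N))
    (hφcont : Continuous φ)
    (hφbdd : ∃ B : ℝ, ∀ t, 0 ≤ t → ‖φ t‖ ≤ B)
    (hPE : ∃ T₀ > (0 : ℝ), ∃ α₀ > (0 : ℝ), ∀ t, 0 ≤ t →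
      ∀ v : EuclideanSpace ℝ (Fin N), ‖v‖ = 1 →
        α₀ ≤ ∫ s in t..(t + T₀), ⟪v, φ s⟫ ^ 2)
    (ey : ℝ → ℝ)
    (hey : ∀ t, ey t = ⟪θ t - θstar, φ t⟫)
    (hθ : ∀ t, 0 ≤ t → HasDerivAt θ ((-(γ * ey t)) • φ t) t) :
    Filter.Tendsto (fun t => θ t - θstar) Filter.atTop (nhds 0) := by
  obtain ⟨B, hB⟩ := hφbdd
  obtain ⟨T₀, hT₀, α₀, hα₀, hPE⟩ := hPE
  have heyfun : ey = fun t => ⟪θ t - θstar, φ t⟫ := funext hey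
  subst heyfun
  set θt : ℝ → EuclideanSpace ℝ (Fin N) := fun t => θ t - θstar with hθtdef
  set e : ℝ → ℝ := fun t => ⟪θ t - θstar, φ t⟫ with hedef
  set V : ℝ → ℝ := fun t => ‖θt t‖ ^ 2 with hVdef
  have hB0 : 0 ≤ B := le_trans (norm_nonneg _) (hB 0 le_rfl)
  have hθtD : ∀ t, 0 ≤ t → HasDerivAt θt ((-(γ * e t)) • φ t) t :=
    fun t ht => (hθ t ht).sub_const θstar
  have hθtC : ∀ t, 0 ≤ t → ContinuousAt θt t := fun t ht => (hθtD t ht).continuousAt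
  have heC : ∀ t, 0 ≤ t → ContinuousAt e t :=
    fun t ht => (hθtC t ht).inner hφcont.continuousAt
  have heCOn : ∀ s t : ℝ, 0 ≤ s → ContinuousOn e (Set.Icc s t) :=
    fun s t hs u hu => ((heC u (le_trans hs hu.1)).continuousWithinAt)
  have hVnn : ∀ t, 0 ≤ V t := fun t => sq_nonneg _
  -- derivative of V
  have hVD : ∀ t, 0 ≤ t → HasDerivAt V (-(2*γ) * (e t)^2) t := by
    intro t ht
    have h := HasDerivAt.inner ℝ (hθtD t ht) (hθtD t ht)
    have hval : ⟪θt t, (-(γ * e t)) • φ t⟫ + ⟪(-(γ * e t)) • φ t, θt t⟫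
        = -(2*γ) * (e t)^2 := by
      have h1 : ⟪φ t, θt t⟫ = e t := by rw [real_inner_comm]
      have h2 : ⟪θt t, φ t⟫ = e t := rfl
      rw [real_inner_smul_right, real_inner_smul_left, h1, h2]; ring
    rw [hval] at h
    have : (fun s => ⟪θt s, θt s⟫) = V := by
      funext s; rw [hVdef]; exact real_inner_self_eq_norm_sq _
    rwa [this] at h
  -- FTC for V
  have hVsub : ∀ s t : ℝ, 0 ≤ s → s ≤ t →
      V t - V s = ∫ u in s..t, (-(2*γ) * (e u)^2) := by
    intro s t hs hst
    rw [intervalIntegral.integral_eq_sub_of_hasDerivAt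
      (fun u hu => hVD u (le_trans hs (by rw [Set.uIcc_of_le hst] at hu; exact hu.1)))]
    apply ContinuousOn.intervalIntegrable
    rw [Set.uIcc_of_le hst]
    exact (continuousOn_const.mul ((heCOn s t hs).pow 2))
  have hVmono : ∀ s t : ℝ, 0 ≤ s → s ≤ t → V t ≤ V s := by
    intro s t hs hst
    have h := hVsub s t hs hst
    have hnp : ∫ u in s..t, (-(2*γ) * (e u)^2) ≤ 0 := by
      rw [← neg_nonneg, ← intervalIntegral.integral_neg]
      apply intervalIntegral.integral_nonneg hst
      intro u _
      have : -(-(2*γ) * (e u)^2) = (2*γ) * (e u)^2 := by ring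
      rw [this]
      positivity
    linarith
  -- constants
  set C : ℝ := 2 + 2*γ^2*B^4*T₀^2 with hCdef
  have hC : 0 < C := by positivity
  set q : ℝ := max (1 - 2*γ*α₀/C) 0 with hqdef
  have hq0 : 0 ≤ q := le_max_right _ _
  have hq1 : q < 1 := by
    apply max_lt _ one_pos
    have : 0 < 2*γ*α₀/C := by positivity
    linarith
  -- key contraction step
  have hstep : ∀ t, 0 ≤ t → V (t + T₀) ≤ q * V t := by
    intro t ht
    have htb : t ≤ t + T₀ := by linarith
    set E : ℝ := ∫ u in t..t+T₀, (e u)^2 with hEdef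
    have heOn := heCOn t (t+T₀) ht
    have hE0 : 0 ≤ E := intervalIntegral.integral_nonneg htb (fun u _ => sq_nonneg _)
    have hVb : V (t + T₀) = V t - 2*γ*E := by
      have h := hVsub t (t+T₀) ht htb
      rw [intervalIntegral.integral_const_mul] at h
      rw [hEdef]; linarith
    -- bound on drift
    have hgcont : ContinuousOn (fun u => (-(γ * e u)) • φ u) (Set.Icc t (t+T₀)) :=
      ((continuousOn_const.mul heOn).neg).smul hφcont.continuousOn
    have hcbig : IntervalIntegrable (fun u => γ * B * |e u|) volume t (t+T₀) := by
      apply ContinuousOn.intervalIntegrable; rw [Set.uIcc_of_le htb]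
      exact continuousOn_const.mul heOn.abs
    set I : ℝ := ∫ u in t..t+T₀, |e u| with hIdef
    have hI0 : 0 ≤ I := intervalIntegral.integral_nonneg htb (fun u _ => abs_nonneg _)
    have hIsq : I^2 ≤ T₀ * E := by
      have := cs_integral htb heOn
      simpa [hIdef, hEdef] using this
    have hdrift : ∀ s ∈ Set.Icc t (t+T₀), ‖θt s - θt t‖^2 ≤ γ^2*B^2*T₀*E := by
      intro s hs
      have hts : t ≤ s := hs.1
      have hsb : s ≤ t + T₀ := hs.2
      have hsub : Set.Icc t s ⊆ Set.Icc t (t+T₀) := Set.Icc_subset_Icc le_rfl hsb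
      have hgs : ContinuousOn (fun u => (-(γ * e u)) • φ u) (Set.Icc t s) := hgcont.mono hsub
      have hgsInt : IntervalIntegrable (fun u => (-(γ * e u)) • φ u) volume t s := by
        apply ContinuousOn.intervalIntegrable; rwa [Set.uIcc_of_le hts]
      have hftc : θt s - θt t = ∫ u in t..s, ((-(γ * e u)) • φ u) :=
        (intervalIntegral.integral_eq_sub_of_hasDerivAt
          (fun u hu => hθtD u (le_trans ht (by rw [Set.uIcc_of_le hts] at hu; exact hu.1)))
          hgsInt).symm
      have hnint : IntervalIntegrable (fun u => ‖(-(γ * e u)) • φ u‖) volume t s := by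
        apply ContinuousOn.intervalIntegrable; rw [Set.uIcc_of_le hts]; exact hgs.norm
      have hcint : IntervalIntegrable (fun u => γ * B * |e u|) volume t s := by
        apply ContinuousOn.intervalIntegrable; rw [Set.uIcc_of_le hts]
        exact continuousOn_const.mul ((heOn.mono hsub).abs)
      have hstep1 : ‖∫ u in t..s, ((-(γ * e u)) • φ u)‖
          ≤ ∫ u in t..s, ‖(-(γ * e u)) • φ u‖ :=
        intervalIntegral.norm_integral_le_integral_norm hts
      have hstep2 : ∫ u in t..s, ‖(-(γ * e u)) • φ u‖ ≤ ∫ u in t..s, γ * B * |e u| := by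
        apply intervalIntegral.integral_mono_on hts hnint hcint
        intro u hu
        rw [norm_smul]
        have h1 : ‖(-(γ * e u))‖ = γ * |e u| := by
          rw [Real.norm_eq_abs, abs_neg, abs_mul, abs_of_pos hγ]
        rw [h1]
        have h2 : ‖φ u‖ ≤ B := hB u (le_trans ht hu.1)
        calc γ * |e u| * ‖φ u‖ ≤ γ * |e u| * B :=
              mul_le_mul_of_nonneg_left h2 (by positivity)
          _ = γ * B * |e u| := by ring
      have hstep3 : ∫ u in t..s, γ * B * |e u| ≤ ∫ u in t..t+T₀, γ * B * |e u| := by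
        apply intervalIntegral.integral_mono_interval le_rfl hts hsb _ hcbig
        filter_upwards with u using by positivity
      have hstep4 : ∫ u in t..t+T₀, γ * B * |e u| = γ * B * I := by
        rw [hIdef, intervalIntegral.integral_const_mul]
      have hnormb : ‖θt s - θt t‖ ≤ γ * B * I := by
        rw [hftc]; rw [hstep4] at hstep3; linarith
      have hsq : ‖θt s - θt t‖^2 ≤ (γ * B * I)^2 :=
        pow_le_pow_left₀ (norm_nonneg _) hnormb 2
      nlinarith [sq_nonneg (γ*B), mul_nonneg (mul_nonneg hγ.le hB0) hI0]
    -- pointwise bound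
    have hpt : ∀ s ∈ Set.Icc t (t+T₀),
        ⟪θt t, φ s⟫^2 ≤ 2*(e s)^2 + 2*B^2*(γ^2*B^2*T₀*E) := by
      intro s hs
      have hsplit : ⟪θt t, φ s⟫ = e s + ⟪θt t - θt s, φ s⟫ := by
        have h := inner_sub_left (𝕜 := ℝ) (θt t) (θt s) (φ s)
        have h2 : ⟪θt s, φ s⟫ = e s := rfl
        rw [h2] at h
        linarith [h]
      have hb2 : ⟪θt t - θt s, φ s⟫^2 ≤ B^2*(γ^2*B^2*T₀*E) := by
        have h1 : |⟪θt t - θt s, φ s⟫| ≤ ‖θt t - θt s‖ * ‖φ s‖ :=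
          abs_real_inner_le_norm _ _
        have h2 : ‖φ s‖ ≤ B := hB s (le_trans ht hs.1)
        have h3 : ‖θt t - θt s‖^2 ≤ γ^2*B^2*T₀*E := by
          rw [norm_sub_rev]; exact hdrift s hs
        have h4 : ⟪θt t - θt s, φ s⟫^2 ≤ (‖θt t - θt s‖ * ‖φ s‖)^2 := by
          rw [← sq_abs]; exact pow_le_pow_left₀ (abs_nonneg _) h1 2
        have hφ2 : ‖φ s‖^2 ≤ B^2 := pow_le_pow_left₀ (norm_nonneg _) h2 2
        have hK0 : (0:ℝ) ≤ γ^2*B^2*T₀*E := mul_nonneg (by positivity) hE0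
        calc ⟪θt t - θt s, φ s⟫^2 ≤ (‖θt t - θt s‖ * ‖φ s‖)^2 := h4
          _ = ‖θt t - θt s‖^2 * ‖φ s‖^2 := by ring
          _ ≤ (γ^2*B^2*T₀*E) * B^2 := mul_le_mul h3 hφ2 (sq_nonneg _) hK0
          _ = B^2*(γ^2*B^2*T₀*E) := by ring
      rw [hsplit]
      nlinarith [hb2, sq_nonneg (e s - inner ℝ (θt t - θt s) (φ s) : ℝ)]
    -- integrate the pointwise bound
    have hintU : ∫ s in t..t+T₀, ⟪θt t, φ s⟫^2 ≤ 2*E + 2*B^2*(γ^2*B^2*T₀*E)*T₀ := by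
      have h1 : ∫ s in t..t+T₀, ⟪θt t, φ s⟫^2
          ≤ ∫ s in t..t+T₀, (2*(e s)^2 + 2*B^2*(γ^2*B^2*T₀*E)) := by
        apply intervalIntegral.integral_mono_on htb
        · apply ContinuousOn.intervalIntegrable
          exact ((continuous_const.inner hφcont).pow 2).continuousOn
        · apply ContinuousOn.intervalIntegrable
          rw [Set.uIcc_of_le htb]
          exact (continuousOn_const.mul (heOn.pow 2)).add continuousOn_const
        · exact hpt
      have h2 : ∫ s in t..t+T₀, (2*(e s)^2 + 2*B^2*(γ^2*B^2*T₀*E))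
          = 2*E + 2*B^2*(γ^2*B^2*T₀*E)*T₀ := by
        have he2 : IntervalIntegrable (fun u => 2*(e u)^2) volume t (t+T₀) := by
          apply ContinuousOn.intervalIntegrable; rw [Set.uIcc_of_le htb]
          exact continuousOn_const.mul (heOn.pow 2)
        rw [intervalIntegral.integral_add he2 intervalIntegrable_const,
          intervalIntegral.integral_const_mul, intervalIntegral.integral_const,
          ← hEdef, smul_eq_mul]
        ring
      linarith
    -- PE lower bound
    have hintL : α₀ * V t ≤ ∫ s in t..t+T₀, ⟪θt t, φ s⟫^2 := by
      rcases eq_or_ne (θt t) 0 with h0 | h0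
      · have : V t = 0 := by rw [hVdef]; simp [h0]
        rw [this, mul_zero]
        exact intervalIntegral.integral_nonneg htb (fun u _ => sq_nonneg _)
      · have hr : 0 < ‖θt t‖ := norm_pos_iff.mpr h0
        set v : EuclideanSpace ℝ (Fin N) := ‖θt t‖⁻¹ • θt t with hv
        have hvnorm : ‖v‖ = 1 := by
          rw [hv, norm_smul, norm_inv, norm_norm, inv_mul_cancel₀ hr.ne']
        have hPEv := hPE t ht v hvnorm
        have hinner : ∀ s, ⟪v, φ s⟫^2 = (‖θt t‖⁻¹)^2 * ⟪θt t, φ s⟫^2 := by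
          intro s; rw [hv, real_inner_smul_left]; ring
        rw [show (fun s => ⟪v, φ s⟫^2) = fun s => (‖θt t‖⁻¹)^2 * ⟪θt t, φ s⟫^2
          from funext hinner] at hPEv
        rw [intervalIntegral.integral_const_mul] at hPEv
        have hVt : V t = ‖θt t‖^2 := rfl
        rw [hVt]
        have hr2 : 0 < ‖θt t‖^2 := by positivity
        calc α₀ * ‖θt t‖^2 ≤ ((‖θt t‖⁻¹)^2 * ∫ s in t..t+T₀, ⟪θt t, φ s⟫^2) * ‖θt t‖^2 := by
              apply mul_le_mul_of_nonneg_right hPEv hr2.le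
          _ = ∫ s in t..t+T₀, ⟪θt t, φ s⟫^2 := by
              field_simp
      -- end
    have hEC : α₀ * V t ≤ C * E := by
      have : 2*E + 2*B^2*(γ^2*B^2*T₀*E)*T₀ = C * E := by rw [hCdef]; ring
      linarith [hintL, hintU]
    -- conclude step
    have hElb : α₀ / C * V t ≤ E := by
      rw [div_mul_eq_mul_div, div_le_iff₀ hC]
      linarith [hEC]
    have h1 : V (t+T₀) ≤ (1 - 2*γ*α₀/C) * V t := by
      rw [hVb]
      have : 2*γ*(α₀/C * V t) ≤ 2*γ*E := by
        apply mul_le_mul_of_nonneg_left hElb (by positivity)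
      have heq : 2*γ*α₀/C * V t = 2*γ*(α₀/C*V t) := by ring
      nlinarith [this]
    calc V (t+T₀) ≤ (1 - 2*γ*α₀/C) * V t := h1
      _ ≤ q * V t := mul_le_mul_of_nonneg_right (le_max_left _ _) (hVnn t)
  -- geometric decay along multiples of T₀
  have hgeo : ∀ n : ℕ, V (n * T₀) ≤ q^n * V 0 := by
    intro n
    induction n with
    | zero => simp
    | succ n ih =>
      have hn0 : (0:ℝ) ≤ n * T₀ := by positivity
      have : V ((n:ℝ) * T₀ + T₀) ≤ q * V ((n:ℝ) * T₀) := hstep _ hn0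
      have hcast : ((n+1 : ℕ) : ℝ) * T₀ = (n:ℝ) * T₀ + T₀ := by push_cast; ring
      rw [hcast]
      calc V ((n:ℝ) * T₀ + T₀) ≤ q * V ((n:ℝ)*T₀) := this
        _ ≤ q * (q^n * V 0) := mul_le_mul_of_nonneg_left ih hq0
        _ = q^(n+1) * V 0 := by ring
  -- V tends to 0
  have hVlim : Tendsto V atTop (nhds 0) := by
    have hmaj : Tendsto (fun t : ℝ => q^(⌊t/T₀⌋₊) * V 0) atTop (nhds 0) := by
      have h1 : Tendsto (fun n : ℕ => q^n * V 0) atTop (nhds 0) := by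
        have := (tendsto_pow_atTop_nhds_zero_of_lt_one hq0 hq1).mul_const (V 0)
        simpa using this
      have h2 : Tendsto (fun t : ℝ => ⌊t/T₀⌋₊) atTop atTop :=
        tendsto_nat_floor_atTop.comp (Tendsto.atTop_div_const hT₀ tendsto_id)
      exact h1.comp h2
    apply squeeze_zero' (Filter.Eventually.of_forall hVnn) _ hmaj
    filter_upwards [eventually_ge_atTop (0:ℝ)] with t ht
    set n : ℕ := ⌊t/T₀⌋₊ with hn
    have hnle : (n:ℝ) * T₀ ≤ t := by
      have := Nat.floor_le (div_nonneg ht hT₀.le)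
      rw [← hn] at this
      calc (n:ℝ) * T₀ ≤ (t/T₀) * T₀ := mul_le_mul_of_nonneg_right this hT₀.le
        _ = t := div_mul_cancel₀ t hT₀.ne'
    have hn0 : (0:ℝ) ≤ (n:ℝ) * T₀ := by positivity
    calc V t ≤ V ((n:ℝ)*T₀) := hVmono _ _ hn0 hnle
      _ ≤ q^n * V 0 := hgeo n
  -- conclude
  have hnormlim : Tendsto (fun t => ‖θt t‖) atTop (nhds 0) := by
    have hsqrt : Tendsto (fun t => Real.sqrt (V t)) atTop (nhds 0) := by
      have := (Real.continuous_sqrt.tendsto 0).comp hVlim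
      simpa [Function.comp_def] using this
    have : (fun t => Real.sqrt (V t)) = fun t => ‖θt t‖ := by
      funext t; rw [hVdef]; exact Real.sqrt_sq (norm_nonneg _)
    rwa [this] at hsqrt
  exact tendsto_zero_iff_norm_tendsto_zero.mpr hnormlim
end
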